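/- arXiv:2206.07672 — 8 statements merged into one kernel-verified Lean document; each statement's English description precedes it below -/
import Mathlib

section
/- Let n ≥ 2 be a natural number and let L be a natural number with n/16 ≤ L ≤ n. Let X_1,…,X_L and Y_1,…,Y_L be {0,1}-valued random variables on a probability space such that the family (X_i)_{i=1}^L is mutually independent, the family (Y_i)_{i=1}^L is mutually independent, and for every i one has E[X_i] ≤ E[Y_i] − c·√(log n / n), where c ≥ 600 is a real constant. Set X = Σ_{i=1}^L X_i and Y = Σ_{i=1}^L Y_i. Then ℙ( Y > X + 24·√(n·log n) ) ≥ 1 − 1/n⁶. -/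
open MeasureTheory ProbabilityTheory Real

lemma exp_quad {x : ℝ} (hx : |x| ≤ 1) : Real.exp x ≤ 1 + x + 5/4 * x ^ 2 := by
  have h := Real.exp_bound hx (by norm_num : 0 < 2)
  have h2 : ∑ i ∈ Finset.range 2, x ^ i / (Nat.factorial i : ℝ) = 1 + x := by
    simp [Finset.sum_range_succ]
  rw [h2] at h
  have h3 : |x| ^ 2 = x ^ 2 := sq_abs x
  rw [h3] at h
  have h5 : ((Nat.succ 2 : ℕ) : ℝ) / ((Nat.factorial 2 : ℝ) * (2:ℕ)) = 3/4 := by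
    norm_num [Nat.factorial]
  rw [h5] at h
  have := abs_le.mp h
  nlinarith [sq_nonneg x]

lemma bern_int {Ω : Type*} [MeasureSpace Ω] [IsProbabilityMeasure (ℙ : Measure Ω)]
    {Z : Ω → ℝ} (hm : Measurable Z) (h01 : ∀ ω, Z ω = 0 ∨ Z ω = 1) :
    Integrable Z ℙ := by
  refine (integrable_const (1:ℝ)).mono' hm.aestronglyMeasurable ?_
  filter_upwards with ω
  rcases h01 ω with h | h <;> simp [h]

lemma bern_mean_nonneg {Ω : Type*} [MeasureSpace Ω] [IsProbabilityMeasure (ℙ : Measure Ω)]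
    {Z : Ω → ℝ} (h01 : ∀ ω, Z ω = 0 ∨ Z ω = 1) : 0 ≤ ∫ ω, Z ω ∂ℙ := by
  refine integral_nonneg fun ω => ?_
  rcases h01 ω with h | h <;> simp [h]

lemma bern_mean_le_one {Ω : Type*} [MeasureSpace Ω] [IsProbabilityMeasure (ℙ : Measure Ω)]
    {Z : Ω → ℝ} (hm : Measurable Z) (h01 : ∀ ω, Z ω = 0 ∨ Z ω = 1) :
    ∫ ω, Z ω ∂ℙ ≤ 1 := by
  have h := integral_mono (bern_int hm h01) (integrable_const (1:ℝ))
    (fun ω => by rcases h01 ω with h | h <;> simp [h])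
  simpa using h

lemma bern_exp_eq {Ω : Type*} {Z : Ω → ℝ} (h01 : ∀ ω, Z ω = 0 ∨ Z ω = 1) (t : ℝ) :
    (fun ω => Real.exp (t * Z ω)) = fun ω => 1 + (Real.exp t - 1) * Z ω := by
  funext ω
  rcases h01 ω with h | h <;> simp [h]

lemma bern_exp_int {Ω : Type*} [MeasureSpace Ω] [IsProbabilityMeasure (ℙ : Measure Ω)]
    {Z : Ω → ℝ} (hm : Measurable Z) (h01 : ∀ ω, Z ω = 0 ∨ Z ω = 1) (t : ℝ) :
    Integrable (fun ω => Real.exp (t * Z ω)) ℙ := by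
  rw [bern_exp_eq h01 t]
  exact (integrable_const (1:ℝ)).add ((bern_int hm h01).const_mul _)

lemma bern_mgf {Ω : Type*} [MeasureSpace Ω] [IsProbabilityMeasure (ℙ : Measure Ω)]
    {Z : Ω → ℝ} (hm : Measurable Z) (h01 : ∀ ω, Z ω = 0 ∨ Z ω = 1) (t : ℝ) :
    mgf Z ℙ t = 1 + (Real.exp t - 1) * ∫ ω, Z ω ∂ℙ := by
  unfold mgf
  rw [bern_exp_eq h01 t,
    integral_add (integrable_const (1:ℝ)) ((bern_int hm h01).const_mul _),
    MeasureTheory.integral_const_mul]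
  simp

lemma bern_mgf_le {Ω : Type*} [MeasureSpace Ω] [IsProbabilityMeasure (ℙ : Measure Ω)]
    {Z : Ω → ℝ} (hm : Measurable Z) (h01 : ∀ ω, Z ω = 0 ∨ Z ω = 1) {t : ℝ}
    (ht : |t| ≤ 1) :
    mgf Z ℙ t ≤ Real.exp (t * (∫ ω, Z ω ∂ℙ) + 5/4 * t ^ 2) := by
  rw [bern_mgf hm h01 t]
  set p := ∫ ω, Z ω ∂ℙ with hp
  have hp0 : 0 ≤ p := bern_mean_nonneg h01
  have hp1 : p ≤ 1 := bern_mean_le_one hm h01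
  have he : Real.exp t ≤ 1 + t + 5/4 * t ^ 2 := exp_quad ht
  have h1 : 1 + (Real.exp t - 1) * p ≤ 1 + (t + 5/4 * t ^ 2) * p := by nlinarith
  have h2 : 1 + (t + 5/4 * t ^ 2) * p ≤ Real.exp ((t + 5/4 * t ^ 2) * p) := by
    have := Real.add_one_le_exp ((t + 5/4 * t ^ 2) * p)
    linarith
  have h3 : (t + 5/4 * t ^ 2) * p ≤ t * p + 5/4 * t ^ 2 := by nlinarith [sq_nonneg t]
  exact h1.trans (h2.trans (Real.exp_le_exp.mpr h3))

lemma sum_mgf_le {Ω : Type*} [MeasureSpace Ω] [IsProbabilityMeasure (ℙ : Measure Ω)]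
    {L : ℕ} {Z : Fin L → Ω → ℝ} (hm : ∀ i, Measurable (Z i))
    (h01 : ∀ i ω, Z i ω = 0 ∨ Z i ω = 1)
    (hind : iIndepFun Z ℙ) {t : ℝ} (ht : |t| ≤ 1) :
    mgf (∑ i, Z i) ℙ t ≤
      Real.exp (t * (∑ i, ∫ ω, Z i ω ∂ℙ) + 5/4 * t ^ 2 * L) := by
  rw [hind.mgf_sum hm]
  calc ∏ i, mgf (Z i) ℙ t
      ≤ ∏ i, Real.exp (t * (∫ ω, Z i ω ∂ℙ) + 5/4 * t ^ 2) := by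
        refine Finset.prod_le_prod (fun i _ => mgf_nonneg) fun i _ =>
          bern_mgf_le (hm i) (h01 i) ht
    _ = Real.exp (∑ i, (t * (∫ ω, Z i ω ∂ℙ) + 5/4 * t ^ 2)) := (Real.exp_sum _ _).symm
    _ = Real.exp (t * (∑ i, ∫ ω, Z i ω ∂ℙ) + 5/4 * t ^ 2 * L) := by
        rw [Finset.sum_add_distrib, ← Finset.mul_sum, Finset.sum_const]
        simp [mul_comm]

set_option maxHeartbeats 1000000 in
theorem stmt_0 {Ω : Type*} [MeasureSpace Ω] [IsProbabilityMeasure (ℙ : Measure Ω)]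
    (n L : ℕ) (hn : 2 ≤ n) (hL1 : (n : ℝ) / 16 ≤ L) (hL2 : L ≤ n)
    (c : ℝ) (hc : 600 ≤ c)
    (X Y : Fin L → Ω → ℝ)
    (hXmeas : ∀ i, Measurable (X i)) (hYmeas : ∀ i, Measurable (Y i))
    (hX01 : ∀ i ω, X i ω = 0 ∨ X i ω = 1)
    (hY01 : ∀ i ω, Y i ω = 0 ∨ Y i ω = 1)
    (hXindep : iIndepFun X ℙ)
    (hYindep : iIndepFun Y ℙ)
    (hmean : ∀ i, ∫ ω, X i ω ∂ℙ ≤ (∫ ω, Y i ω ∂ℙ) - c * Real.sqrt (Real.log n / n)) :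
    ENNReal.ofReal (1 - 1 / (n : ℝ) ^ 6) ≤
      ℙ {ω | (∑ i, X i ω) + 24 * Real.sqrt ((n : ℝ) * Real.log n) < ∑ i, Y i ω} := by
  -- basic positivity facts
  have hnR : (2:ℝ) ≤ n := by exact_mod_cast hn
  have hn0 : (0:ℝ) < n := by linarith
  have hlog : 0 < Real.log n := Real.log_pos (by linarith)
  have hL0 : (0:ℝ) < L := lt_of_lt_of_le (by positivity) hL1
  have hLpos : 0 < L := by exact_mod_cast hL0
  set s : ℝ := Real.sqrt (Real.log n / n) with hs_def
  set R : ℝ := Real.sqrt ((n : ℝ) * Real.log n) with hR_def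
  have hs0 : 0 ≤ s := Real.sqrt_nonneg _
  have hR0 : 0 ≤ R := Real.sqrt_nonneg _
  have hRns : R = (n : ℝ) * s := by
    rw [hR_def, hs_def, show (n : ℝ) * Real.log n = (n:ℝ)^2 * (Real.log n / n) by
      field_simp, Real.sqrt_mul (by positivity), Real.sqrt_sq hn0.le]
  have hR2 : R ^ 2 = (n : ℝ) * Real.log n := Real.sq_sqrt (by positivity)
  -- s ≤ 1/600
  have hs600 : s ≤ 1 / 600 := by
    set i0 : Fin L := ⟨0, hLpos⟩
    have h1 := hmean i0
    have h2 : 0 ≤ ∫ ω, X i0 ω ∂ℙ := bern_mean_nonneg (hX01 i0)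
    have h3 : (∫ ω, Y i0 ω ∂ℙ) ≤ 1 := bern_mean_le_one (hYmeas i0) (hY01 i0)
    nlinarith
  -- means and gap
  set mX : ℝ := ∑ i, ∫ ω, X i ω ∂ℙ with hmX
  set mY : ℝ := ∑ i, ∫ ω, Y i ω ∂ℙ with hmY
  have hgap : mX + (75/2) * R ≤ mY := by
    have h1 : ∀ i ∈ (Finset.univ : Finset (Fin L)),
        (∫ ω, X i ω ∂ℙ) + c * s ≤ ∫ ω, Y i ω ∂ℙ := fun i _ => by
      have := hmean i; linarith
    have h2 := Finset.sum_le_sum h1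
    rw [Finset.sum_add_distrib, Finset.sum_const, Finset.card_univ] at h2
    simp only [Fintype.card_fin, nsmul_eq_mul] at h2
    have hcs : (75/2) * R ≤ (L : ℝ) * (c * s) := by
      rw [hRns]
      have hcs0 : (0:ℝ) ≤ c * s := mul_nonneg (by linarith) hs0
      have e1 : ((n:ℝ)/16) * (c * s) ≤ (L:ℝ) * (c * s) :=
        mul_le_mul_of_nonneg_right hL1 hcs0
      have e2 : ((n:ℝ)/16) * (600 * s) ≤ ((n:ℝ)/16) * (c * s) :=
        mul_le_mul_of_nonneg_left (mul_le_mul_of_nonneg_right hc hs0) (by positivity)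
      nlinarith
    linarith
  -- parameters
  set a : ℝ := 27/4 * R with ha_def
  have ha0 : 0 ≤ a := by positivity
  set t : ℝ := a / (2 * L) with ht_def
  have ht0 : 0 ≤ t := by positivity
  have ht1 : t ≤ 1 := by
    rw [ht_def, div_le_one (by positivity)]
    rw [ha_def, hRns]
    nlinarith
  have htabs : |t| ≤ 1 := abs_le.mpr ⟨by linarith, ht1⟩
  have htabs' : |(-t)| ≤ 1 := by rwa [abs_neg]
  -- exponent bound
  have hexp_key : -t * a + 5/4 * t ^ 2 * (L : ℝ) ≤ -8 * Real.log n := by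
    have h1 : -t * a + 5/4 * t ^ 2 * (L : ℝ) = -(3/16) * (a ^ 2 / L) := by
      rw [ht_def]; field_simp; ring
    rw [h1]
    have ha2 : a ^ 2 = 729/16 * ((n : ℝ) * Real.log n) := by
      rw [ha_def]; rw [mul_pow]; rw [hR2]; ring
    have hLn : (L : ℝ) ≤ n := by exact_mod_cast hL2
    rw [ha2, neg_mul, neg_mul, neg_le_neg_iff,
      show (3:ℝ)/16 * (729/16 * ((n:ℝ) * Real.log n) / L)
        = 2187/256 * ((n:ℝ) * Real.log n) / L by ring,
      le_div_iff₀ hL0]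
    nlinarith [hlog.le]
  -- integrability of exponentials of sums
  have hSXint : Integrable (fun ω => Real.exp (t * (∑ i, X i) ω)) ℙ :=
    hXindep.integrable_exp_mul_sum hXmeas
      (fun i _ => bern_exp_int (hXmeas i) (hX01 i) t)
  have hSYint : Integrable (fun ω => Real.exp ((-t) * (∑ i, Y i) ω)) ℙ :=
    hYindep.integrable_exp_mul_sum hYmeas
      (fun i _ => bern_exp_int (hYmeas i) (hY01 i) (-t))
  set E : ℝ := ((n:ℝ) ^ 8)⁻¹ with hE
  have hE0 : 0 ≤ E := by positivity
  have hE_eq : Real.exp (-t * a + 5/4 * t ^ 2 * L) ≤ E := by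
    calc Real.exp (-t * a + 5/4 * t ^ 2 * L) ≤ Real.exp (-8 * Real.log n) :=
        Real.exp_le_exp.mpr hexp_key
      _ = ((n:ℝ) ^ 8)⁻¹ := by
        rw [show (-8:ℝ) * Real.log n = -Real.log ((n:ℝ) ^ 8) by
          rw [Real.log_pow]; push_cast; ring, Real.exp_neg,
          Real.exp_log (by positivity)]
  -- upper tail for X
  have hB1 : (ℙ {ω | mX + a ≤ (∑ i, X i) ω}).toReal ≤ E := by
    refine (measure_ge_le_exp_mul_mgf (mX + a) ht0 hSXint).trans ?_
    calc Real.exp (-t * (mX + a)) * mgf (∑ i, X i) ℙ t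
        ≤ Real.exp (-t * (mX + a)) * Real.exp (t * mX + 5/4 * t ^ 2 * L) :=
          mul_le_mul_of_nonneg_left (sum_mgf_le hXmeas hX01 hXindep htabs)
            (Real.exp_pos _).le
      _ = Real.exp (-t * a + 5/4 * t ^ 2 * L) := by
          rw [← Real.exp_add]; congr 1; ring
      _ ≤ E := hE_eq
  -- lower tail for Y
  have hB2 : (ℙ {ω | (∑ i, Y i) ω ≤ mY - a}).toReal ≤ E := by
    refine (measure_le_le_exp_mul_mgf (mY - a) (neg_nonpos.mpr ht0) hSYint).trans ?_
    calc Real.exp (-(-t) * (mY - a)) * mgf (∑ i, Y i) ℙ (-t)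
        ≤ Real.exp (-(-t) * (mY - a)) *
            Real.exp ((-t) * mY + 5/4 * (-t) ^ 2 * L) :=
          mul_le_mul_of_nonneg_left (sum_mgf_le hYmeas hY01 hYindep htabs')
            (Real.exp_pos _).le
      _ = Real.exp (-t * a + 5/4 * t ^ 2 * L) := by
          rw [← Real.exp_add]; congr 1; ring
      _ ≤ E := hE_eq
  -- event and union bound
  set A : Set Ω := {ω | (∑ i, X i ω) + 24 * R < ∑ i, Y i ω} with hA_def
  have hAmeas : MeasurableSet A := by
    have h1 : Measurable fun ω => (∑ i, X i ω) + 24 * R :=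
      (Finset.measurable_sum _ (fun i _ => hXmeas i)).add_const _
    have h2 : Measurable fun ω : Ω => ∑ i, Y i ω :=
      Finset.measurable_sum _ (fun i _ => hYmeas i)
    exact measurableSet_lt h1 h2
  have hsub : Aᶜ ⊆ {ω | mX + a ≤ (∑ i, X i) ω} ∪ {ω | (∑ i, Y i) ω ≤ mY - a} := by
    intro ω hω
    simp only [hA_def, Set.mem_compl_iff, Set.mem_setOf_eq, not_lt] at hω
    by_contra hcon
    simp only [Set.mem_union, Set.mem_setOf_eq, not_or, not_le, Finset.sum_apply] at hcon
    obtain ⟨h1, h2⟩ := hcon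
    have ha24 : a + 24 * R + a = (75/2) * R := by rw [ha_def]; ring
    linarith [hgap]
  have htail : ℙ Aᶜ ≤ ENNReal.ofReal (1 / (n:ℝ) ^ 6) := by
    have hEnn : ∀ S : Set Ω, (ℙ S).toReal ≤ E → ℙ S ≤ ENNReal.ofReal E := fun S h =>
      (ENNReal.le_ofReal_iff_toReal_le (measure_ne_top _ _) hE0).mpr h
    calc ℙ Aᶜ
        ≤ ℙ ({ω | mX + a ≤ (∑ i, X i) ω} ∪ {ω | (∑ i, Y i) ω ≤ mY - a}) :=
          measure_mono hsub
      _ ≤ ℙ {ω | mX + a ≤ (∑ i, X i) ω} + ℙ {ω | (∑ i, Y i) ω ≤ mY - a} :=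
          measure_union_le _ _
      _ ≤ ENNReal.ofReal E + ENNReal.ofReal E := add_le_add (hEnn _ hB1) (hEnn _ hB2)
      _ = ENNReal.ofReal (E + E) := (ENNReal.ofReal_add hE0 hE0).symm
      _ ≤ ENNReal.ofReal (1 / (n:ℝ) ^ 6) := by
          refine ENNReal.ofReal_le_ofReal ?_
          rw [hE, show ((n:ℝ)^8)⁻¹ + ((n:ℝ)^8)⁻¹ = 2 / (n:ℝ)^8 by ring,
            div_le_div_iff₀ (by positivity) (by positivity)]
          nlinarith [pow_pos hn0 6, sq_nonneg ((n:ℝ) - 2)]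
  -- conclude
  have hx0 : (0:ℝ) ≤ 1 / (n:ℝ) ^ 6 := by positivity
  have hx1 : (1:ℝ) / (n:ℝ) ^ 6 ≤ 1 := by
    rw [div_le_one (by positivity)]
    have := pow_le_pow_left₀ (by norm_num : (0:ℝ) ≤ 1) (by linarith : (1:ℝ) ≤ (n:ℝ)) 6
    simpa using this
  have hcompl : ℙ A + ℙ Aᶜ = 1 := prob_add_prob_compl hAmeas
  have key : ENNReal.ofReal (1 - 1/(n:ℝ)^6) + ENNReal.ofReal (1/(n:ℝ)^6)
      ≤ ℙ A + ENNReal.ofReal (1/(n:ℝ)^6) := by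
    rw [← ENNReal.ofReal_add (by linarith) hx0,
      show (1:ℝ) - 1/(n:ℝ)^6 + 1/(n:ℝ)^6 = 1 by ring, ENNReal.ofReal_one, ← hcompl]
    exact add_le_add_right htail _
  exact (ENNReal.add_le_add_iff_right ENNReal.ofReal_ne_top).mp key
end

section
/- Let n ≥ 2 be a natural number and let L be a natural number with n/16 ≤ L ≤ n. Let X_1,…,X_L and Y_1,…,Y_L be {0,1}-valued random variables on a probability space such that the family (X_i)_{i=1}^L is mutually independent, the family (Y_i)_{i=1}^L is mutually independent, and for every i one has E[X_i] = E[Y_i]. Set X = Σ_{i=1}^L X_i and Y = Σ_{i=1}^L Y_i. Then ℙ( |X − Y| ≤ 12·√(n·log n) ) ≥ 1 − 1/n⁶. -/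
open MeasureTheory ProbabilityTheory Real

lemma exp_quad_s1 {t : ℝ} (ht : |t| ≤ 1) : exp t - 1 - t ≤ t ^ 2 := by
  have h := Real.exp_bound ht (n := 2) (by norm_num)
  have h2 : |exp t - (1 + t)| ≤ |t| ^ 2 * (3 / 4) := by
    convert h using 2
    · simp [Finset.sum_range_succ]
    · norm_num
  have := abs_le.mp h2
  have ht2 : |t| ^ 2 = t ^ 2 := sq_abs t
  nlinarith [sq_nonneg t]

lemma mgf_center_le {Ω : Type*} [MeasureSpace Ω] [IsProbabilityMeasure (ℙ : Measure Ω)]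
    (Z : Ω → ℝ) (hm : Measurable Z) (h01 : ∀ ω, Z ω = 0 ∨ Z ω = 1) {t : ℝ} (ht : |t| ≤ 1) :
    mgf (fun ω => Z ω - ∫ ω, Z ω ∂ℙ) ℙ t ≤ exp (t ^ 2) := by
  set p : ℝ := ∫ ω, Z ω ∂ℙ with hp
  have hZint : Integrable Z ℙ := by
    refine (integrable_const (1 : ℝ)).mono' hm.aestronglyMeasurable (ae_of_all _ fun ω => ?_)
    rcases h01 ω with h | h <;> simp [h]
  have hp0 : 0 ≤ p := integral_nonneg fun ω => by rcases h01 ω with h | h <;> simp [h]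
  have hp1 : p ≤ 1 := by
    have : ∫ ω, Z ω ∂ℙ ≤ ∫ _ω, (1 : ℝ) ∂(ℙ : Measure Ω) := by
      refine integral_mono (μ := (ℙ : Measure Ω)) hZint (integrable_const 1) fun ω => ?_
      rcases h01 ω with h | h <;> simp [h]
    simpa using this
  have key : ∀ ω, exp (t * (Z ω - p)) = exp (-(t * p)) * (1 + (exp t - 1) * Z ω) := by
    intro ω
    rw [show t * (Z ω - p) = -(t * p) + t * Z ω by ring, Real.exp_add]
    rcases h01 ω with h | h <;> simp [h]
  have hmgf : mgf (fun ω => Z ω - p) ℙ t = exp (-(t * p)) * (1 + (exp t - 1) * p) := by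
    unfold mgf
    rw [show (fun ω => exp (t * (Z ω - p))) = fun ω => exp (-(t * p)) * (1 + (exp t - 1) * Z ω)
      from funext key]
    rw [integral_const_mul, integral_add (integrable_const 1) (hZint.const_mul _),
      integral_const, integral_const_mul]
    simp [hp]
  rw [hmgf]
  have h1 : 1 + (exp t - 1) * p ≤ exp ((exp t - 1) * p) := by
    have := Real.add_one_le_exp ((exp t - 1) * p)
    linarith
  have h2 : exp (-(t * p)) * (1 + (exp t - 1) * p) ≤ exp (-(t * p) + (exp t - 1) * p) := by
    rw [Real.exp_add]
    have : 0 ≤ exp (-(t * p)) := (Real.exp_pos _).le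
    nlinarith [h1]
  refine h2.trans (Real.exp_le_exp.mpr ?_)
  have h3 : exp t - 1 - t ≤ t ^ 2 := exp_quad_s1 ht
  have h4 : 0 ≤ exp t - 1 - t := by nlinarith [Real.add_one_le_exp t]
  nlinarith

lemma tail_bound {Ω : Type*} [MeasureSpace Ω] [IsProbabilityMeasure (ℙ : Measure Ω)]
    {L : ℕ} (Z : Fin L → Ω → ℝ) (hmeas : ∀ i, Measurable (Z i))
    (h01 : ∀ i ω, Z i ω = 0 ∨ Z i ω = 1)
    (hindep : iIndepFun Z ℙ)
    (ε t : ℝ) (ht0 : 0 ≤ t) (ht1 : t ≤ 1) :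
    ℙ {ω | ε ≤ |(∑ i, Z i ω) - ∑ i, ∫ ω, Z i ω ∂ℙ|} ≤
      ENNReal.ofReal (2 * exp (-t * ε + L * t ^ 2)) := by
  classical
  set p : Fin L → ℝ := fun i => ∫ ω, Z i ω ∂ℙ with hpdef
  set W : Fin L → Ω → ℝ := fun i ω => Z i ω - p i with hWdef
  have hWmeas : ∀ i, Measurable (W i) := fun i => (hmeas i).sub measurable_const
  have hWindep : iIndepFun W ℙ := by
    have := hindep.comp (fun i (x : ℝ) => x - p i)
      (fun i => measurable_id.sub measurable_const)
    exact this
  have hWbdd : ∀ i ω, |W i ω| ≤ 2 := by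
    intro i ω
    have hp0 : 0 ≤ p i := integral_nonneg fun ω => by rcases h01 i ω with h | h <;> simp [h]
    have hp1 : p i ≤ 1 := by
      have : ∫ ω, Z i ω ∂ℙ ≤ ∫ _ω, (1 : ℝ) ∂(ℙ : Measure Ω) := by
        refine integral_mono ?_ (integrable_const 1) fun ω => ?_
        · refine (integrable_const (1 : ℝ)).mono' (hmeas i).aestronglyMeasurable
            (ae_of_all _ fun ω => ?_)
          rcases h01 i ω with h | h <;> simp [h]
        · rcases h01 i ω with h | h <;> simp [h]
      simpa using this
    rcases h01 i ω with h | h <;> rw [abs_le] <;> constructor <;>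
      simp [hWdef, h] <;> linarith
  -- sum and bounds
  set S : Ω → ℝ := ∑ i, W i with hSdef
  have hSeq : S = fun ω => ∑ i, W i ω := by funext ω; simp [hSdef]
  have hSmeas : Measurable S := by
    rw [hSeq]; exact Finset.measurable_sum _ fun i _ => hWmeas i
  have hSapp : ∀ ω, S ω = (∑ i, Z i ω) - ∑ i, p i := by
    intro ω
    simp only [hSdef, Finset.sum_apply, hWdef, Finset.sum_sub_distrib]
  have hSbdd : ∀ ω, |S ω| ≤ 2 * L := by
    intro ω
    calc |S ω| = |∑ i, W i ω| := by rw [hSdef]; simp [Finset.sum_apply]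
    _ ≤ ∑ i : Fin L, |W i ω| := Finset.abs_sum_le_sum_abs _ _
    _ ≤ ∑ _i : Fin L, (2:ℝ) := Finset.sum_le_sum fun i _ => hWbdd i ω
    _ = 2 * L := by simp [mul_comm]
  have hint : ∀ s : ℝ, |s| ≤ 1 → Integrable (fun ω => exp (s * S ω)) ℙ := by
    intro s hs
    refine (integrable_const (exp (2 * L))).mono'
      ((hSmeas.const_mul s).exp).aestronglyMeasurable (ae_of_all _ fun ω => ?_)
    rw [Real.norm_eq_abs, abs_of_pos (Real.exp_pos _), Real.exp_le_exp]
    calc s * S ω ≤ |s * S ω| := le_abs_self _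
    _ = |s| * |S ω| := abs_mul _ _
    _ ≤ 1 * (2 * L) := by
        have := hSbdd ω
        have h0 : (0:ℝ) ≤ |S ω| := abs_nonneg _
        nlinarith [abs_nonneg s]
    _ = 2 * L := one_mul _
  have hmgf : ∀ s : ℝ, |s| ≤ 1 → mgf S ℙ s ≤ exp (L * s ^ 2) := by
    intro s hs
    rw [hSdef, hWindep.mgf_sum (t := s) hWmeas Finset.univ]
    calc ∏ i : Fin L, mgf (W i) ℙ s ≤ ∏ _i : Fin L, exp (s ^ 2) := by
          refine Finset.prod_le_prod (fun i _ => mgf_nonneg) fun i _ => ?_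
          exact mgf_center_le (Z i) (hmeas i) (h01 i) hs
    _ = exp (s ^ 2) ^ L := by simp
    _ = exp (L * s ^ 2) := by rw [← Real.exp_nat_mul]
  have habs : |t| ≤ 1 := abs_le.mpr ⟨by linarith, ht1⟩
  have habs' : |(-t)| ≤ 1 := by rwa [abs_neg]
  have hup : (ℙ {ω | ε ≤ S ω}).toReal ≤ exp (-t * ε + L * t ^ 2) := by
    calc (ℙ {ω | ε ≤ S ω}).toReal ≤ exp (-t * ε) * mgf S ℙ t :=
          measure_ge_le_exp_mul_mgf ε ht0 (hint t habs)
    _ ≤ exp (-t * ε) * exp (L * t ^ 2) := by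
        have := hmgf t habs
        nlinarith [Real.exp_pos (-t * ε), mgf_nonneg (X := S) (μ := (ℙ : Measure Ω)) (t := t)]
    _ = exp (-t * ε + L * t ^ 2) := (Real.exp_add _ _).symm
  have hlo : (ℙ {ω | S ω ≤ -ε}).toReal ≤ exp (-t * ε + L * t ^ 2) := by
    calc (ℙ {ω | S ω ≤ -ε}).toReal ≤ exp (-(-t) * (-ε)) * mgf S ℙ (-t) :=
          measure_le_le_exp_mul_mgf (-ε) (neg_nonpos_of_nonneg ht0) (hint (-t) habs')
    _ ≤ exp (-t * ε) * exp (L * t ^ 2) := by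
        have h1 := hmgf (-t) habs'
        have h2 : -(-t) * (-ε) = -t * ε := by ring
        rw [h2]
        have h3 : (-t) ^ 2 = t ^ 2 := by ring
        rw [h3] at h1
        nlinarith [Real.exp_pos (-t * ε), mgf_nonneg (X := S) (μ := (ℙ : Measure Ω)) (t := -t)]
    _ = exp (-t * ε + L * t ^ 2) := (Real.exp_add _ _).symm
  have hsub : {ω | ε ≤ |(∑ i, Z i ω) - ∑ i, ∫ ω, Z i ω ∂ℙ|} ⊆
      {ω | ε ≤ S ω} ∪ {ω | S ω ≤ -ε} := by
    intro ω hω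
    simp only [Set.mem_setOf_eq] at hω
    rw [← hSapp ω] at hω
    rcases le_abs.mp hω with h | h
    · exact Or.inl h
    · exact Or.inr (show S ω ≤ -ε by linarith)
  calc ℙ {ω | ε ≤ |(∑ i, Z i ω) - ∑ i, ∫ ω, Z i ω ∂ℙ|}
      ≤ ℙ ({ω | ε ≤ S ω} ∪ {ω | S ω ≤ -ε}) := measure_mono hsub
    _ ≤ ℙ {ω | ε ≤ S ω} + ℙ {ω | S ω ≤ -ε} := measure_union_le _ _
    _ ≤ ENNReal.ofReal (exp (-t * ε + L * t ^ 2)) + ENNReal.ofReal (exp (-t * ε + L * t ^ 2)) := by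
        gcongr
        · rw [← ENNReal.ofReal_toReal (measure_ne_top ℙ _)]
          exact ENNReal.ofReal_le_ofReal hup
        · rw [← ENNReal.ofReal_toReal (measure_ne_top ℙ _)]
          exact ENNReal.ofReal_le_ofReal hlo
    _ = ENNReal.ofReal (2 * exp (-t * ε + L * t ^ 2)) := by
        rw [← ENNReal.ofReal_add (Real.exp_pos _).le (Real.exp_pos _).le]
        ring_nf
set_option maxHeartbeats 1000000 in
theorem stmt_1 {Ω : Type*} [MeasureSpace Ω] [IsProbabilityMeasure (ℙ : Measure Ω)]
    (n L : ℕ) (hn : 2 ≤ n) (hL1 : (n : ℝ) / 16 ≤ L) (hL2 : L ≤ n)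
    (X Y : Fin L → Ω → ℝ)
    (hXmeas : ∀ i, Measurable (X i)) (hYmeas : ∀ i, Measurable (Y i))
    (hX01 : ∀ i ω, X i ω = 0 ∨ X i ω = 1)
    (hY01 : ∀ i ω, Y i ω = 0 ∨ Y i ω = 1)
    (hXindep : iIndepFun X ℙ)
    (hYindep : iIndepFun Y ℙ)
    (hmean : ∀ i, ∫ ω, X i ω ∂ℙ = ∫ ω, Y i ω ∂ℙ) :
    ENNReal.ofReal (1 - 1 / (n : ℝ) ^ 6) ≤
      ℙ {ω | |(∑ i, X i ω) - ∑ i, Y i ω| ≤ 12 * Real.sqrt ((n : ℝ) * Real.log n)} := by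
  have hn2 : (2 : ℝ) ≤ (n : ℝ) := by exact_mod_cast hn
  have hnpos : (0 : ℝ) < n := by linarith
  have hlogpos : 0 < Real.log n := Real.log_pos (by linarith)
  set s : ℝ := Real.sqrt ((n : ℝ) * Real.log n) with hsdef
  have hs0 : 0 ≤ s := Real.sqrt_nonneg _
  have hs2 : s ^ 2 = (n : ℝ) * Real.log n := Real.sq_sqrt (by positivity)
  set E : Set Ω := {ω | |(∑ i, X i ω) - ∑ i, Y i ω| ≤ 12 * s} with hEdef
  by_cases hcase : (n : ℝ) ≤ 144 * Real.log n
  · -- small n: the event is everything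
    have hEuniv : E = Set.univ := by
      rw [Set.eq_univ_iff_forall]
      intro ω
      have hXb : 0 ≤ ∑ i, X i ω ∧ ∑ i, X i ω ≤ (L : ℝ) := by
        constructor
        · exact Finset.sum_nonneg fun i _ => by rcases hX01 i ω with h | h <;> simp [h]
        · calc ∑ i, X i ω ≤ ∑ _i : Fin L, (1:ℝ) :=
              Finset.sum_le_sum fun i _ => by rcases hX01 i ω with h | h <;> simp [h]
          _ = L := by simp
      have hYb : 0 ≤ ∑ i, Y i ω ∧ ∑ i, Y i ω ≤ (L : ℝ) := by
        constructor
        · exact Finset.sum_nonneg fun i _ => by rcases hY01 i ω with h | h <;> simp [h]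
        · calc ∑ i, Y i ω ≤ ∑ _i : Fin L, (1:ℝ) :=
              Finset.sum_le_sum fun i _ => by rcases hY01 i ω with h | h <;> simp [h]
          _ = L := by simp
      have hLn : (L : ℝ) ≤ n := by exact_mod_cast hL2
      have hns : (n : ℝ) ≤ 12 * s := by
        have h1 : (n : ℝ) ^ 2 ≤ 144 * ((n : ℝ) * Real.log n) := by nlinarith
        nlinarith [hs2, hs0]
      show |(∑ i, X i ω) - ∑ i, Y i ω| ≤ 12 * s
      rw [abs_le]
      constructor <;> [nlinarith [hXb.1, hXb.2, hYb.1, hYb.2]; nlinarith [hXb.1, hXb.2, hYb.1, hYb.2]]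
    rw [hEdef] at hEuniv ⊢
    rw [hEuniv, measure_univ]
    exact ENNReal.ofReal_le_one.mpr (sub_le_self 1 (by positivity))
  · -- large n: Chernoff
    push_neg at hcase
    set t : ℝ := 3 * s / n with htdef
    have ht0 : 0 ≤ t := by positivity
    have ht2 : t ^ 2 = 9 * Real.log n / n := by
      rw [htdef, div_pow, mul_pow, hs2]
      field_simp
      ring
    have ht1 : t ≤ 1 := by
      have h1 : t ^ 2 ≤ 1 := by
        rw [ht2]
        rw [div_le_one hnpos]
        nlinarith
      nlinarith [sq_nonneg (t - 1)]
    have hexp : -t * (6 * s) + (L : ℝ) * t ^ 2 ≤ -9 * Real.log n := by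
      have hLn : (L : ℝ) ≤ n := by exact_mod_cast hL2
      have h1 : t * (6 * s) = 18 * Real.log n := by
        rw [htdef]
        field_simp
        nlinarith [hs2]
      have h2 : (L : ℝ) * t ^ 2 ≤ 9 * Real.log n := by
        rw [ht2]
        calc (L:ℝ) * (9 * Real.log n / n) ≤ (n:ℝ) * (9 * Real.log n / n) :=
              mul_le_mul_of_nonneg_right hLn (by positivity)
        _ = 9 * Real.log n := by field_simp
      linarith
    have hXtail := tail_bound X hXmeas hX01 hXindep (6 * s) t ht0 ht1
    have hYtail := tail_bound Y hYmeas hY01 hYindep (6 * s) t ht0 ht1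
    -- complement inclusion
    have hmXY : (∑ i, ∫ ω, X i ω ∂ℙ) = ∑ i, ∫ ω, Y i ω ∂ℙ :=
      Finset.sum_congr rfl fun i _ => hmean i
    have hsub : Eᶜ ⊆ {ω | 6 * s ≤ |(∑ i, X i ω) - ∑ i, ∫ ω, X i ω ∂ℙ|} ∪
        {ω | 6 * s ≤ |(∑ i, Y i ω) - ∑ i, ∫ ω, Y i ω ∂ℙ|} := by
      intro ω hω
      simp only [hEdef, Set.mem_compl_iff, Set.mem_setOf_eq, not_le] at hω
      by_contra hcon
      simp only [Set.mem_union, Set.mem_setOf_eq, not_or, not_le] at hcon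
      obtain ⟨h1, h2⟩ := hcon
      rw [← hmXY] at h2
      have htri : |(∑ i, X i ω) - ∑ i, Y i ω| ≤
          |(∑ i, X i ω) - ∑ i, ∫ ω, X i ω ∂ℙ| + |(∑ i, Y i ω) - ∑ i, ∫ ω, X i ω ∂ℙ| := by
        have h := abs_sub ((∑ i, X i ω) - ∑ i, ∫ ω, X i ω ∂ℙ)
          ((∑ i, Y i ω) - ∑ i, ∫ ω, X i ω ∂ℙ)
        have heq : ((∑ i, X i ω) - ∑ i, ∫ ω, X i ω ∂ℙ) - ((∑ i, Y i ω) - ∑ i, ∫ ω, X i ω ∂ℙ)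
            = (∑ i, X i ω) - ∑ i, Y i ω := by ring
        rwa [heq] at h
      linarith
    have hepos : (0:ℝ) < exp (-t * (6 * s) + (L : ℝ) * t ^ 2) := Real.exp_pos _
    have hn6pos : (0:ℝ) < (n:ℝ) ^ 6 := by positivity
    have hreal : 4 * exp (-t * (6 * s) + (L : ℝ) * t ^ 2) ≤ 1 / (n:ℝ) ^ 6 := by
      have he : exp (-t * (6 * s) + (L : ℝ) * t ^ 2) ≤ exp (-9 * Real.log n) :=
        Real.exp_le_exp.mpr (by linarith [hexp])
      have hexplog : exp (-9 * Real.log n) = ((n:ℝ) ^ (9:ℕ))⁻¹ := by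
        rw [show (-9:ℝ) * Real.log n = -Real.log ((n:ℝ) ^ (9:ℕ)) by
          rw [Real.log_pow]; push_cast; ring, Real.exp_neg, Real.exp_log (by positivity)]
      rw [hexplog] at he
      have hn3 : (8:ℝ) ≤ (n:ℝ) ^ 3 := by
        have h23 : (2:ℝ) ^ 3 ≤ (n:ℝ) ^ 3 := pow_le_pow_left₀ (by norm_num) hn2 3
        norm_num at h23
        linarith
      have h9 : (0:ℝ) < (n:ℝ) ^ 9 := by positivity
      have key : 4 * ((n:ℝ) ^ (9:ℕ))⁻¹ ≤ 1 / (n:ℝ) ^ 6 := by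
        have h89 : (8:ℝ) * (n:ℝ) ^ 6 ≤ (n:ℝ) ^ 9 := by
          nlinarith [mul_le_mul_of_nonneg_right hn3 hn6pos.le]
        rw [← one_div, mul_one_div, div_le_div_iff₀ h9 hn6pos]
        nlinarith [hn6pos]
      linarith
    have hEc : ℙ Eᶜ ≤ ENNReal.ofReal (1 / (n:ℝ) ^ 6) := by
      calc ℙ Eᶜ ≤ ℙ ({ω | 6 * s ≤ |(∑ i, X i ω) - ∑ i, ∫ ω, X i ω ∂ℙ|} ∪
          {ω | 6 * s ≤ |(∑ i, Y i ω) - ∑ i, ∫ ω, Y i ω ∂ℙ|}) := measure_mono hsub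
      _ ≤ ℙ {ω | 6 * s ≤ |(∑ i, X i ω) - ∑ i, ∫ ω, X i ω ∂ℙ|} +
          ℙ {ω | 6 * s ≤ |(∑ i, Y i ω) - ∑ i, ∫ ω, Y i ω ∂ℙ|} := measure_union_le _ _
      _ ≤ ENNReal.ofReal (2 * exp (-t * (6 * s) + (L : ℝ) * t ^ 2)) +
          ENNReal.ofReal (2 * exp (-t * (6 * s) + (L : ℝ) * t ^ 2)) := add_le_add hXtail hYtail
      _ = ENNReal.ofReal (4 * exp (-t * (6 * s) + (L : ℝ) * t ^ 2)) := by
          rw [← ENNReal.ofReal_add (by positivity) (by positivity)]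
          congr 1
          ring
      _ ≤ ENNReal.ofReal (1 / (n:ℝ) ^ 6) := ENNReal.ofReal_le_ofReal hreal
    have hsplit : (1 : ENNReal) ≤ ℙ E + ℙ Eᶜ := by
      rw [← measure_univ (μ := (ℙ : Measure Ω)), ← Set.union_compl_self E]
      exact measure_union_le _ _
    calc ENNReal.ofReal (1 - 1 / (n:ℝ) ^ 6) = 1 - ENNReal.ofReal (1 / (n:ℝ) ^ 6) := by
          rw [ENNReal.ofReal_sub _ (by positivity), ENNReal.ofReal_one]
    _ ≤ 1 - ℙ Eᶜ := tsub_le_tsub_left hEc 1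
    _ ≤ ℙ E := tsub_le_iff_right.mpr hsplit
end

section
/- Let n ≥ 8 be a natural number and τ ≥ 10⁴ a real constant. Let A, B₁, B₂ be finite index sets with n/16 ≤ |A| ≤ n, |B₁| ≤ 2·√n and |B₂| ≤ 2·√n. Let (U_x)_{x∈A} together with (V_y)_{y∈B₁} be a mutually independent family of {0,1}-valued random variables on a probability space, and let (W_x)_{x∈A} together with (Z_y)_{y∈B₂} also be a mutually independent family of {0,1}-valued random variables (the two families need not be independent of each other). Suppose E[W_x] − E[U_x] ≥ τ·√(log n)/(9·√n) for every x ∈ A. Then ℙ( Σ_{x∈A} W_x + Σ_{y∈B₂} Z_y > Σ_{x∈A} U_x + Σ_{y∈B₁} V_y ) ≥ 1 − 1/n⁶. -/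
open MeasureTheory ProbabilityTheory Real Finset

lemma int01_bounds {Ω : Type*} [MeasureSpace Ω] [IsProbabilityMeasure (ℙ : Measure Ω)]
    {f : Ω → ℝ} (hf : Measurable f) (h : ∀ ω, f ω = 0 ∨ f ω = 1) :
    Integrable f ℙ ∧ 0 ≤ (∫ ω, f ω ∂ℙ) ∧ (∫ ω, f ω ∂ℙ) ≤ 1 := by
  have hb : ∀ ω, ‖f ω‖ ≤ 1 := by
    intro ω; rcases h ω with h' | h' <;> simp [h']
  have hint : Integrable f ℙ :=
    ⟨hf.aestronglyMeasurable, HasFiniteIntegral.of_bounded (ae_of_all _ hb)⟩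
  have h0 : (0:ℝ) ≤ ∫ ω, f ω ∂ℙ := by
    refine integral_nonneg fun ω => ?_
    rcases h ω with h' | h' <;> simp [h']
  refine ⟨hint, h0, ?_⟩
  · have h2 : (∫ ω, f ω ∂ℙ) ≤ ∫ _ : Ω, (1:ℝ) ∂ℙ := by
      refine integral_mono hint (integrable_const 1) fun ω => ?_
      rcases h ω with h' | h' <;> simp [h']
    simpa using h2

lemma tailAux_upper {Ω ι : Type*} [MeasureSpace Ω] [IsProbabilityMeasure (ℙ : Measure Ω)]
    [Fintype ι] (X : ι → Ω → ℝ) (hmeas : ∀ i, Measurable (X i))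
    (h01 : ∀ i ω, X i ω = 0 ∨ X i ω = 1)
    (hindep : iIndepFun X ℙ)
    {t : ℝ} (ht : 0 < t) (ht1 : t ≤ 1) (a : ℝ) :
    (ℙ {ω | a ≤ ∑ i, X i ω}).toReal ≤
      Real.exp ((Fintype.card ι) * t ^ 2 + t * ((∑ i, ∫ ω, X i ω ∂ℙ) - a)) := by
  have hXint : ∀ i, Integrable (X i) ℙ := fun i => (int01_bounds (hmeas i) (h01 i)).1
  have hp0 : ∀ i, 0 ≤ ∫ ω, X i ω ∂ℙ := fun i => (int01_bounds (hmeas i) (h01 i)).2.1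
  have hp1 : ∀ i, (∫ ω, X i ω ∂ℙ) ≤ 1 := fun i => (int01_bounds (hmeas i) (h01 i)).2.2
  have hSmeas : Measurable fun ω => ∑ i, X i ω :=
    Finset.measurable_sum _ fun i _ => hmeas i
  have hInt : Integrable (fun ω => Real.exp (t * ∑ i, X i ω)) ℙ := by
    refine ⟨((hSmeas.const_mul t).exp).aestronglyMeasurable,
      HasFiniteIntegral.of_bounded (C := Real.exp (t * Fintype.card ι)) (ae_of_all _ fun ω => ?_)⟩
    rw [Real.norm_eq_abs, abs_of_pos (Real.exp_pos _)]
    refine Real.exp_le_exp.2 (mul_le_mul_of_nonneg_left ?_ ht.le)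
    calc ∑ i, X i ω ≤ ∑ _i : ι, (1:ℝ) := by
          refine Finset.sum_le_sum fun i _ => ?_
          rcases h01 i ω with h' | h' <;> simp [h']
      _ = Fintype.card ι := by rw [Finset.sum_const, Finset.card_univ, nsmul_eq_mul, mul_one]
  have key := measure_ge_le_exp_mul_mgf (μ := ℙ) (X := fun ω => ∑ i, X i ω) a ht.le hInt
  refine key.trans ?_
  have hmgf : mgf (fun ω => ∑ i, X i ω) ℙ t = ∏ i, mgf (X i) ℙ t := by
    rw [show (fun ω => ∑ i, X i ω) = ∑ i, X i by funext ω; simp]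
    exact hindep.mgf_sum hmeas Finset.univ
  have hmgf_i : ∀ i, mgf (X i) ℙ t ≤ Real.exp ((Real.exp t - 1) * ∫ ω, X i ω ∂ℙ) := by
    intro i
    have heq : mgf (X i) ℙ t = 1 + (Real.exp t - 1) * ∫ ω, X i ω ∂ℙ := by
      unfold mgf
      rw [show (fun ω => Real.exp (t * X i ω)) = fun ω => 1 + (Real.exp t - 1) * X i ω by
        funext ω; rcases h01 i ω with h' | h' <;> simp [h']]
      rw [integral_add (integrable_const 1) ((hXint i).const_mul _)]
      simp [integral_const_mul]
    rw [heq]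
    have := Real.add_one_le_exp ((Real.exp t - 1) * ∫ ω, X i ω ∂ℙ)
    linarith
  have hprod : ∏ i, mgf (X i) ℙ t ≤
      Real.exp ((Real.exp t - 1) * ∑ i, ∫ ω, X i ω ∂ℙ) := by
    calc ∏ i, mgf (X i) ℙ t ≤ ∏ i, Real.exp ((Real.exp t - 1) * ∫ ω, X i ω ∂ℙ) :=
          Finset.prod_le_prod (fun i _ => mgf_nonneg) (fun i _ => hmgf_i i)
      _ = Real.exp (∑ i, (Real.exp t - 1) * ∫ ω, X i ω ∂ℙ) := (Real.exp_sum _ _).symm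
      _ = _ := by rw [← Finset.mul_sum]
  have hexp3 : Real.exp t ≤ 1 + t + t ^ 2 := by
    have h := Real.exp_bound' ht.le ht1 (n := 2) (by norm_num)
    simp [Finset.sum_range_succ] at h
    nlinarith
  have hμ0 : (0:ℝ) ≤ ∑ i, ∫ ω, X i ω ∂ℙ := Finset.sum_nonneg fun i _ => hp0 i
  have hμc : (∑ i, ∫ ω, X i ω ∂ℙ) ≤ Fintype.card ι := by
    calc (∑ i, ∫ ω, X i ω ∂ℙ) ≤ ∑ _i : ι, (1:ℝ) := Finset.sum_le_sum fun i _ => hp1 i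
      _ = Fintype.card ι := by rw [Finset.sum_const, Finset.card_univ, nsmul_eq_mul, mul_one]
  calc Real.exp (-t * a) * mgf (fun ω => ∑ i, X i ω) ℙ t
      ≤ Real.exp (-t * a) * Real.exp ((Real.exp t - 1) * ∑ i, ∫ ω, X i ω ∂ℙ) := by
        rw [hmgf]; exact mul_le_mul_of_nonneg_left hprod (Real.exp_pos _).le
    _ = Real.exp (-t * a + (Real.exp t - 1) * ∑ i, ∫ ω, X i ω ∂ℙ) := (Real.exp_add _ _).symm
    _ ≤ Real.exp ((Fintype.card ι) * t ^ 2 + t * ((∑ i, ∫ ω, X i ω ∂ℙ) - a)) := by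
        refine Real.exp_le_exp.2 ?_
        have h1 : 1 + t ≤ Real.exp t := by
          have := Real.add_one_le_exp t; linarith
        nlinarith [mul_le_mul_of_nonneg_right hexp3 hμ0,
          mul_le_mul_of_nonneg_left hμc (sq_nonneg t)]

lemma tailAux_lower {Ω ι : Type*} [MeasureSpace Ω] [IsProbabilityMeasure (ℙ : Measure Ω)]
    [Fintype ι] (X : ι → Ω → ℝ) (hmeas : ∀ i, Measurable (X i))
    (h01 : ∀ i ω, X i ω = 0 ∨ X i ω = 1)
    (hindep : iIndepFun X ℙ)
    {t : ℝ} (ht : 0 < t) (ht1 : t ≤ 1) (a : ℝ) :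
    (ℙ {ω | (∑ i, X i ω) ≤ a}).toReal ≤
      Real.exp ((Fintype.card ι) * t ^ 2 + t * (a - ∑ i, ∫ ω, X i ω ∂ℙ)) := by
  have hXint : ∀ i, Integrable (X i) ℙ := fun i => (int01_bounds (hmeas i) (h01 i)).1
  set Y : ι → Ω → ℝ := fun i ω => 1 - X i ω with hY
  have hYmeas : ∀ i, Measurable (Y i) := fun i => measurable_const.sub (hmeas i)
  have hY01 : ∀ i ω, Y i ω = 0 ∨ Y i ω = 1 := by
    intro i ω; rcases h01 i ω with h' | h' <;> simp [hY, h']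
  have hYindep : iIndepFun Y ℙ :=
    hindep.comp (fun _ v => 1 - v) (fun _ => measurable_const.sub measurable_id)
  have hset : {ω | (∑ i, X i ω) ≤ a} = {ω | ((Fintype.card ι : ℝ) - a) ≤ ∑ i, Y i ω} := by
    ext ω
    have : ∑ i, Y i ω = (Fintype.card ι : ℝ) - ∑ i, X i ω := by
      rw [Finset.sum_sub_distrib, Finset.sum_const, Finset.card_univ, nsmul_eq_mul, mul_one]
    simp only [Set.mem_setOf_eq, this]
    constructor <;> intro h <;> linarith
  have hint : ∀ i, (∫ ω, Y i ω ∂ℙ) = 1 - ∫ ω, X i ω ∂ℙ := by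
    intro i
    simp [hY, integral_sub (integrable_const 1) (hXint i)]
  have key := tailAux_upper Y hYmeas hY01 hYindep ht ht1 ((Fintype.card ι : ℝ) - a)
  rw [hset]
  refine key.trans (le_of_eq ?_)
  congr 1
  rw [show (∑ i, ∫ ω, Y i ω ∂ℙ) = (Fintype.card ι : ℝ) - ∑ i, ∫ ω, X i ω ∂ℙ by
    simp only [hint]
    rw [Finset.sum_sub_distrib, Finset.sum_const, Finset.card_univ, nsmul_eq_mul, mul_one]]
  ring
set_option maxHeartbeats 1000000 in
theorem stmt_5 {Ω : Type*} [MeasureSpace Ω] [IsProbabilityMeasure (ℙ : Measure Ω)]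
    (n : ℕ) (hn : 8 ≤ n) (τ : ℝ) (hτ : 10 ^ 4 ≤ τ)
    {A B₁ B₂ : Type*} [Fintype A] [Fintype B₁] [Fintype B₂]
    (hA1 : (n : ℝ) / 16 ≤ Fintype.card A) (hA2 : (Fintype.card A : ℝ) ≤ n)
    (hB1 : (Fintype.card B₁ : ℝ) ≤ 2 * Real.sqrt n)
    (hB2 : (Fintype.card B₂ : ℝ) ≤ 2 * Real.sqrt n)
    (U W : A → Ω → ℝ) (V : B₁ → Ω → ℝ) (Z : B₂ → Ω → ℝ)
    (hUmeas : ∀ x, Measurable (U x)) (hWmeas : ∀ x, Measurable (W x))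
    (hVmeas : ∀ y, Measurable (V y)) (hZmeas : ∀ y, Measurable (Z y))
    (hU01 : ∀ x ω, U x ω = 0 ∨ U x ω = 1) (hW01 : ∀ x ω, W x ω = 0 ∨ W x ω = 1)
    (hV01 : ∀ y ω, V y ω = 0 ∨ V y ω = 1) (hZ01 : ∀ y ω, Z y ω = 0 ∨ Z y ω = 1)
    (hUVindep : iIndepFun (Sum.elim U V) ℙ)
    (hWZindep : iIndepFun (Sum.elim W Z) ℙ)
    (hmean : ∀ x : A, τ * Real.sqrt (Real.log n) / (9 * Real.sqrt n) ≤
      (∫ ω, W x ω ∂ℙ) - ∫ ω, U x ω ∂ℙ) :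
    ENNReal.ofReal (1 - 1 / (n : ℝ) ^ 6) ≤
      ℙ {ω | (∑ x, U x ω) + ∑ y, V y ω < (∑ x, W x ω) + ∑ y, Z y ω} := by
  have hn' : (8:ℝ) ≤ (n:ℝ) := by exact_mod_cast hn
  have hnpos : (0:ℝ) < n := by linarith
  set s : ℝ := Real.sqrt n with hs_def
  have hs0 : 0 < s := Real.sqrt_pos.2 hnpos
  have hs2 : s ^ 2 = n := Real.sq_sqrt hnpos.le
  have hs_ge2 : 2 ≤ s := by nlinarith
  have hlog : (2:ℝ) ≤ Real.log n := by
    have h8 : Real.log 8 ≤ Real.log n := Real.log_le_log (by norm_num) hn'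
    have h2 : Real.log 8 = 3 * Real.log 2 := by
      rw [show (8:ℝ) = 2 ^ 3 by norm_num, Real.log_pow]; push_cast; ring
    have := Real.log_two_gt_d9
    nlinarith
  have hlogpos : (0:ℝ) < Real.log n := by linarith
  set L : ℝ := Real.sqrt (Real.log n) with hL_def
  have hL2 : L ^ 2 = Real.log n := Real.sq_sqrt hlogpos.le
  have hL1 : 1 ≤ L := by nlinarith [Real.sqrt_nonneg (Real.log n)]
  have hL0 : 0 < L := by linarith
  clear_value s L
  set μU : ℝ := ∑ x, ∫ ω, U x ω ∂ℙ with hμU_def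
  set μW : ℝ := ∑ x, ∫ ω, W x ω ∂ℙ with hμW_def
  set μV : ℝ := ∑ y, ∫ ω, V y ω ∂ℙ with hμV_def
  set μZ : ℝ := ∑ y, ∫ ω, Z y ω ∂ℙ with hμZ_def
  have hμU0 : 0 ≤ μU := Finset.sum_nonneg fun x _ => (int01_bounds (hUmeas x) (hU01 x)).2.1
  have hμZ0 : 0 ≤ μZ := Finset.sum_nonneg fun y _ => (int01_bounds (hZmeas y) (hZ01 y)).2.1
  have hμWc : μW ≤ Fintype.card A := by
    calc μW ≤ ∑ _x : A, (1:ℝ) :=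
          Finset.sum_le_sum fun x _ => (int01_bounds (hWmeas x) (hW01 x)).2.2
      _ = Fintype.card A := by
          rw [Finset.sum_const, Finset.card_univ, nsmul_eq_mul, mul_one]
  have hμV2s : μV ≤ 2 * s := by
    calc μV ≤ ∑ _y : B₁, (1:ℝ) :=
          Finset.sum_le_sum fun y _ => (int01_bounds (hVmeas y) (hV01 y)).2.2
      _ = Fintype.card B₁ := by
          rw [Finset.sum_const, Finset.card_univ, nsmul_eq_mul, mul_one]
      _ ≤ 2 * s := hB1
  have hgap : τ * s * L / 144 ≤ μW - μU := by
    have hsum : (Fintype.card A : ℝ) * (τ * L / (9 * s)) ≤ μW - μU := by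
      have h1 : ∑ _x : A, (τ * L / (9 * s)) ≤ ∑ x : A, ((∫ ω, W x ω ∂ℙ) - ∫ ω, U x ω ∂ℙ) :=
        Finset.sum_le_sum fun x _ => hmean x
      rw [Finset.sum_const, Finset.card_univ, nsmul_eq_mul, Finset.sum_sub_distrib] at h1
      exact h1
    have hpos : (0:ℝ) ≤ τ * L / (9 * s) := by positivity
    have h2 : ((n:ℝ) / 16) * (τ * L / (9 * s)) ≤ (Fintype.card A : ℝ) * (τ * L / (9 * s)) :=
      mul_le_mul_of_nonneg_right hA1 hpos
    have h3 : ((n:ℝ) / 16) * (τ * L / (9 * s)) = τ * s * L / 144 := by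
      rw [← hs2]; field_simp; ring
    linarith
  clear_value μU μW μV μZ
  set d : ℝ := (μW - μU) / 2 - s with hd_def
  clear_value d
  have hsL0 : 0 < s * L := mul_pos hs0 hL0
  have hd1 : 33 * (s * L) ≤ d := by
    have hmul : 10 ^ 4 * (s * L) ≤ τ * (s * L) :=
      mul_le_mul_of_nonneg_right hτ hsL0.le
    have hsL : s ≤ s * L := by nlinarith
    rw [hd_def]; nlinarith
  have hd0 : 0 < d := lt_of_lt_of_le (by positivity) hd1
  have hdn : d ≤ (n:ℝ) / 2 := by
    rw [hd_def]; linarith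
  set t : ℝ := d / (4 * n) with ht_def
  clear_value t
  have ht0 : 0 < t := by
    rw [ht_def]; exact div_pos hd0 (by positivity)
  have ht1 : t ≤ 1 := by
    rw [ht_def, div_le_one (by positivity)]
    have h35 : (0:ℝ) ≤ 7 * (n:ℝ) := by positivity
    linarith [hdn]
  set a : ℝ := μU + μV + d with ha_def
  clear_value a
  have hfmeas : Measurable fun ω => (∑ x, U x ω) + ∑ y, V y ω :=
    (Finset.measurable_sum _ fun x _ => hUmeas x).add
      (Finset.measurable_sum _ fun y _ => hVmeas y)
  have hgmeas : Measurable fun ω => (∑ x, W x ω) + ∑ y, Z y ω :=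
    (Finset.measurable_sum _ fun x _ => hWmeas x).add
      (Finset.measurable_sum _ fun y _ => hZmeas y)
  -- the common numeric bound on the exponent
  have hnl : (n:ℝ) * Real.log n = (s * L) ^ 2 := by rw [← hL2, ← hs2]; ring
  have hdsq : 1089 * ((n:ℝ) * Real.log n) ≤ d ^ 2 := by
    rw [hnl]
    nlinarith [mul_self_le_mul_self (by positivity : (0:ℝ) ≤ 33 * (s * L)) hd1]
  have hexp_bound : ∀ c : ℝ, c ≤ (n:ℝ) + 2 * s →
      c * t ^ 2 + t * (-d) ≤ -(7 * Real.log n) := by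
    intro c hc
    have h2s : 2 * s ≤ (n:ℝ) := by nlinarith
    have hc2 : c ≤ 2 * n := by linarith
    have e1 : c * t ^ 2 + t * (-d) = (c * d ^ 2 - 4 * n * d ^ 2) / (16 * n ^ 2) := by
      rw [ht_def]; field_simp; ring
    rw [e1, div_le_iff₀ (by positivity)]
    nlinarith [mul_le_mul_of_nonneg_right hc2 (sq_nonneg d),
      mul_le_mul_of_nonneg_left hdsq (by positivity : (0:ℝ) ≤ 2 * n)]
  -- tail bound for the U,V family
  have hE1 : (ℙ {ω | a ≤ (∑ x, U x ω) + ∑ y, V y ω}).toReal ≤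
      Real.exp (-(7 * Real.log n)) := by
    have hmeas₁ : ∀ i : A ⊕ B₁, Measurable (Sum.elim U V i) := fun i => by
      cases i with
      | inl x => exact hUmeas x
      | inr y => exact hVmeas y
    have h01₁ : ∀ (i : A ⊕ B₁) ω, Sum.elim U V i ω = 0 ∨ Sum.elim U V i ω = 1 := fun i ω => by
      cases i with
      | inl x => exact hU01 x ω
      | inr y => exact hV01 y ω
    have h := tailAux_upper (Sum.elim U V) hmeas₁ h01₁ hUVindep ht0 ht1 a
    rw [show {ω | a ≤ ∑ i : A ⊕ B₁, Sum.elim U V i ω} =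
        {ω | a ≤ (∑ x, U x ω) + ∑ y, V y ω} by
      ext ω; simp [Fintype.sum_sum_type]] at h
    refine h.trans (Real.exp_le_exp.2 ?_)
    have hm : (∑ i : A ⊕ B₁, ∫ ω, Sum.elim U V i ω ∂ℙ) = μU + μV := by
      rw [hμU_def, hμV_def]; simp [Fintype.sum_sum_type]
    have hcard : (Fintype.card (A ⊕ B₁) : ℝ) ≤ (n:ℝ) + 2 * s := by
      rw [Fintype.card_sum]; push_cast; linarith
    rw [hm, show μU + μV - a = -d by rw [ha_def]; ring]
    exact hexp_bound _ hcard
  -- tail bound for the W,Z family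
  have hE2 : (ℙ {ω | (∑ x, W x ω) + ∑ y, Z y ω ≤ a}).toReal ≤
      Real.exp (-(7 * Real.log n)) := by
    have hmeas₂ : ∀ i : A ⊕ B₂, Measurable (Sum.elim W Z i) := fun i => by
      cases i with
      | inl x => exact hWmeas x
      | inr y => exact hZmeas y
    have h01₂ : ∀ (i : A ⊕ B₂) ω, Sum.elim W Z i ω = 0 ∨ Sum.elim W Z i ω = 1 := fun i ω => by
      cases i with
      | inl x => exact hW01 x ω
      | inr y => exact hZ01 y ω
    have h := tailAux_lower (Sum.elim W Z) hmeas₂ h01₂ hWZindep ht0 ht1 a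
    rw [show {ω | (∑ i : A ⊕ B₂, Sum.elim W Z i ω) ≤ a} =
        {ω | (∑ x, W x ω) + ∑ y, Z y ω ≤ a} by
      ext ω; simp [Fintype.sum_sum_type]] at h
    refine h.trans (Real.exp_le_exp.2 ?_)
    have hm : (∑ i : A ⊕ B₂, ∫ ω, Sum.elim W Z i ω ∂ℙ) = μW + μZ := by
      rw [hμW_def, hμZ_def]; simp [Fintype.sum_sum_type]
    have hcard : (Fintype.card (A ⊕ B₂) : ℝ) ≤ (n:ℝ) + 2 * s := by
      rw [Fintype.card_sum]; push_cast; linarith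
    rw [hm]
    have hle : a - (μW + μZ) ≤ -d := by rw [ha_def, hd_def]; linarith
    calc (Fintype.card (A ⊕ B₂) : ℝ) * t ^ 2 + t * (a - (μW + μZ))
        ≤ (Fintype.card (A ⊕ B₂) : ℝ) * t ^ 2 + t * (-d) := by
          have := mul_le_mul_of_nonneg_left hle ht0.le
          linarith
      _ ≤ -(7 * Real.log n) := hexp_bound _ hcard
  have hval : Real.exp (-(7 * Real.log n)) = 1 / (n:ℝ) ^ 7 := by
    rw [Real.exp_neg, show (7:ℝ) * Real.log n = Real.log ((n:ℝ) ^ 7) by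
      rw [Real.log_pow]; push_cast; ring, Real.exp_log (by positivity)]
    exact (one_div _).symm
  have hP1 : ℙ {ω | a ≤ (∑ x, U x ω) + ∑ y, V y ω} ≤ ENNReal.ofReal (1 / (n:ℝ) ^ 7) := by
    rw [← ENNReal.ofReal_toReal (measure_ne_top ℙ _)]
    exact ENNReal.ofReal_le_ofReal (by rw [← hval]; exact hE1)
  have hP2 : ℙ {ω | (∑ x, W x ω) + ∑ y, Z y ω ≤ a} ≤ ENNReal.ofReal (1 / (n:ℝ) ^ 7) := by
    rw [← ENNReal.ofReal_toReal (measure_ne_top ℙ _)]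
    exact ENNReal.ofReal_le_ofReal (by rw [← hval]; exact hE2)
  have hcompl : ℙ ({ω | (∑ x, U x ω) + ∑ y, V y ω < (∑ x, W x ω) + ∑ y, Z y ω}ᶜ) ≤
      ENNReal.ofReal (1 / (n:ℝ) ^ 6) := by
    have hsub : ({ω | (∑ x, U x ω) + ∑ y, V y ω < (∑ x, W x ω) + ∑ y, Z y ω}ᶜ) ⊆
        {ω | a ≤ (∑ x, U x ω) + ∑ y, V y ω} ∪ {ω | (∑ x, W x ω) + ∑ y, Z y ω ≤ a} := by
      intro ω hω
      simp only [Set.mem_compl_iff, Set.mem_setOf_eq, not_lt] at hω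
      rcases le_or_gt a ((∑ x, U x ω) + ∑ y, V y ω) with h | h
      · exact Or.inl h
      · exact Or.inr (hω.trans h.le)
    calc ℙ ({ω | (∑ x, U x ω) + ∑ y, V y ω < (∑ x, W x ω) + ∑ y, Z y ω}ᶜ)
        ≤ ℙ ({ω | a ≤ (∑ x, U x ω) + ∑ y, V y ω} ∪
            {ω | (∑ x, W x ω) + ∑ y, Z y ω ≤ a}) := measure_mono hsub
      _ ≤ ℙ {ω | a ≤ (∑ x, U x ω) + ∑ y, V y ω} +
            ℙ {ω | (∑ x, W x ω) + ∑ y, Z y ω ≤ a} := measure_union_le _ _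
      _ ≤ ENNReal.ofReal (1 / (n:ℝ) ^ 7) + ENNReal.ofReal (1 / (n:ℝ) ^ 7) :=
          add_le_add hP1 hP2
      _ = ENNReal.ofReal (1 / (n:ℝ) ^ 7 + 1 / (n:ℝ) ^ 7) :=
          (ENNReal.ofReal_add (by positivity) (by positivity)).symm
      _ ≤ ENNReal.ofReal (1 / (n:ℝ) ^ 6) := by
          refine ENNReal.ofReal_le_ofReal ?_
          rw [show (1:ℝ) / (n:ℝ) ^ 7 + 1 / (n:ℝ) ^ 7 = 2 / (n:ℝ) ^ 7 by ring,
            div_le_div_iff₀ (by positivity) (by positivity)]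
          nlinarith [pow_pos hnpos 6]
  calc ENNReal.ofReal (1 - 1 / (n : ℝ) ^ 6)
      = 1 - ENNReal.ofReal (1 / (n:ℝ) ^ 6) := by
        rw [ENNReal.ofReal_sub _ (by positivity), ENNReal.ofReal_one]
    _ ≤ 1 - ℙ ({ω | (∑ x, U x ω) + ∑ y, V y ω < (∑ x, W x ω) + ∑ y, Z y ω}ᶜ) :=
        tsub_le_tsub_left hcompl 1
    _ = ℙ {ω | (∑ x, U x ω) + ∑ y, V y ω < (∑ x, W x ω) + ∑ y, Z y ω} := by
        have hS : MeasurableSet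
            {ω | (∑ x, U x ω) + ∑ y, V y ω < (∑ x, W x ω) + ∑ y, Z y ω} :=
          measurableSet_lt hfmeas hgmeas
        rw [measure_compl hS (measure_ne_top _ _), measure_univ]
        exact ENNReal.sub_sub_cancel ENNReal.one_ne_top prob_le_one
end

section
/- Let ρ > 0 be a real number, n ≥ 1 a natural number, and α, β real numbers with α ≥ 2/3 and β = α + 2ρ/√n. Define p₁ = β/(α + 2β), p₂ = p₃ = (α + β)/(2(α + 2β)), q₁ = q₂ = (α + β)/(2(α + 2β)), and q₃ = β/(α + 2β). Then (1/2)·[ (√p₁ − √q₁)² + (√p₂ − √q₂)² + (√p₃ − √q₃)² ] ≤ 4ρ²/n. -/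
theorem stmt_12 (ρ : ℝ) (hρ : 0 < ρ) (n : ℕ) (hn : 1 ≤ n)
    (α β : ℝ) (hα : 2 / 3 ≤ α) (hβ : β = α + 2 * ρ / Real.sqrt n)
    (p₁ p₂ p₃ q₁ q₂ q₃ : ℝ)
    (hp₁ : p₁ = β / (α + 2 * β))
    (hp₂ : p₂ = (α + β) / (2 * (α + 2 * β)))
    (hp₃ : p₃ = (α + β) / (2 * (α + 2 * β)))
    (hq₁ : q₁ = (α + β) / (2 * (α + 2 * β)))
    (hq₂ : q₂ = (α + β) / (2 * (α + 2 * β)))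
    (hq₃ : q₃ = β / (α + 2 * β)) :
    (1 / 2) * ((Real.sqrt p₁ - Real.sqrt q₁) ^ 2 + (Real.sqrt p₂ - Real.sqrt q₂) ^ 2 +
      (Real.sqrt p₃ - Real.sqrt q₃) ^ 2) ≤ 4 * ρ ^ 2 / n := by
  have hn0 : (0:ℝ) < n := by exact_mod_cast hn
  have hsn : (0:ℝ) < Real.sqrt n := Real.sqrt_pos.mpr hn0
  set ε : ℝ := 2 * ρ / Real.sqrt n with hεdef
  have hε : 0 < ε := by positivity
  have hε2 : ε ^ 2 = 4 * ρ ^ 2 / n := by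
    rw [hεdef, div_pow, Real.sq_sqrt hn0.le]; ring
  have hβ' : β = α + ε := hβ
  have hα0 : (0:ℝ) < α := lt_of_lt_of_le (by norm_num) hα
  have hs : α + 2 * β = 3 * α + 2 * ε := by rw [hβ']; ring
  have hs2 : (2:ℝ) ≤ 3 * α + 2 * ε := by nlinarith
  have hs0 : (0:ℝ) < 3 * α + 2 * ε := by linarith
  have hpv : p₁ = (α + ε) / (3 * α + 2 * ε) := by rw [hp₁, hs, hβ']
  have hqv : q₁ = (2 * α + ε) / (2 * (3 * α + 2 * ε)) := by
    rw [hq₁, hs, hβ']; ring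
  have hq14 : (1:ℝ)/4 ≤ q₁ := by
    rw [hqv, le_div_iff₀ (by linarith)]; nlinarith
  have hq0 : (0:ℝ) ≤ q₁ := by linarith
  have hple : q₁ ≤ p₁ := by
    rw [hpv, hqv, div_le_div_iff₀ (by linarith) hs0]; nlinarith
  have hp0 : (0:ℝ) ≤ p₁ := le_trans hq0 hple
  have hsqq : (1:ℝ)/2 ≤ Real.sqrt q₁ := by
    have h14 : Real.sqrt (1/4) = 1/2 := by
      rw [show (1:ℝ)/4 = (1/2)^2 by norm_num, Real.sqrt_sq (by norm_num)]
    calc (1:ℝ)/2 = Real.sqrt (1/4) := h14.symm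
      _ ≤ Real.sqrt q₁ := Real.sqrt_le_sqrt hq14
  have hsqp : Real.sqrt q₁ ≤ Real.sqrt p₁ := Real.sqrt_le_sqrt hple
  have hsum1 : (1:ℝ) ≤ Real.sqrt p₁ + Real.sqrt q₁ := by linarith
  have hprod : (Real.sqrt p₁ - Real.sqrt q₁) * (Real.sqrt p₁ + Real.sqrt q₁) = p₁ - q₁ := by
    have e : (Real.sqrt p₁ - Real.sqrt q₁) * (Real.sqrt p₁ + Real.sqrt q₁)
        = (Real.sqrt p₁)^2 - (Real.sqrt q₁)^2 := by ring
    rw [e, Real.sq_sqrt hp0, Real.sq_sqrt hq0]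
  have hd0 : 0 ≤ Real.sqrt p₁ - Real.sqrt q₁ := by linarith
  have hdiff : Real.sqrt p₁ - Real.sqrt q₁ ≤ p₁ - q₁ := by
    have h := mul_le_mul_of_nonneg_left hsum1 hd0
    rw [mul_one] at h
    linarith [hprod]
  have hT : (Real.sqrt p₁ - Real.sqrt q₁)^2 ≤ (p₁ - q₁)^2 :=
    pow_le_pow_left₀ hd0 hdiff 2
  have key : p₁ - q₁ = ε / (2*(3*α+2*ε)) := by
    rw [hpv, hqv]; field_simp; ring
  have hpq4 : p₁ - q₁ ≤ ε / 4 := by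
    rw [key]
    apply div_le_div_of_nonneg_left hε.le (by norm_num) (by linarith)
  have hpq0 : 0 ≤ p₁ - q₁ := by linarith
  have hmid : (Real.sqrt p₂ - Real.sqrt q₂)^2 = 0 := by
    rw [hp₂, hq₂]; ring
  have hthird : (Real.sqrt p₃ - Real.sqrt q₃)^2 = (Real.sqrt p₁ - Real.sqrt q₁)^2 := by
    rw [hp₃, hq₃, ← hp₁, ← hq₁]; ring
  rw [hmid, hthird]
  have hfin : (Real.sqrt p₁ - Real.sqrt q₁)^2 ≤ ε^2 := by
    have h1 : (p₁ - q₁)^2 ≤ (ε/4)^2 := pow_le_pow_left₀ hpq0 hpq4 2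
    have h2 : (ε/4)^2 = ε^2/16 := by ring
    have h3 : 0 ≤ ε^2 := sq_nonneg ε
    linarith
  rw [← hε2]
  linarith [hfin]
end

section
/- Let α, β be real numbers with 2/3 ≤ α ≤ β. Then √(β/(α + 2β)) − √((α + β)/(2(α + 2β))) ≤ (β − α)/2. -/
theorem stmt_13 (α β : ℝ) (hα : 2 / 3 ≤ α) (hαβ : α ≤ β) :
    Real.sqrt (β / (α + 2 * β)) - Real.sqrt ((α + β) / (2 * (α + 2 * β))) ≤ (β - α) / 2 := by
  have hβ : 2 / 3 ≤ β := le_trans hα hαβ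
  have hD : (0:ℝ) < α + 2 * β := by linarith
  have hq0 : (0:ℝ) ≤ (α + β) / (2 * (α + 2 * β)) := by positivity
  have hc : (0:ℝ) ≤ (β - α) / 2 := by linarith
  have hsq : Real.sqrt ((α + β) / (2 * (α + 2 * β))) ^ 2 = (α + β) / (2 * (α + 2 * β)) :=
    Real.sq_sqrt hq0
  have hq : 1 / (2 * (α + 2 * β)) ≤ Real.sqrt ((α + β) / (2 * (α + 2 * β))) := by
    rw [show (1:ℝ) / (2 * (α + 2 * β)) = Real.sqrt ((1 / (2 * (α + 2 * β)))^2) by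
      rw [Real.sqrt_sq (by positivity)]]
    apply Real.sqrt_le_sqrt
    rw [div_pow, div_le_div_iff₀ (by positivity) (by positivity)]
    nlinarith
  have hqn : 0 ≤ Real.sqrt ((α + β) / (2 * (α + 2 * β))) := Real.sqrt_nonneg _
  have key : β / (α + 2 * β) ≤ (Real.sqrt ((α + β) / (2 * (α + 2 * β))) + (β - α) / 2) ^ 2 := by
    have expand : (Real.sqrt ((α + β) / (2 * (α + 2 * β))) + (β - α) / 2) ^ 2 =
        (α + β) / (2 * (α + 2 * β)) + 2 * ((β - α) / 2) * Real.sqrt ((α + β) / (2 * (α + 2 * β)))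
        + ((β - α) / 2) ^ 2 := by linear_combination hsq
    rw [expand]
    have h1 : 2 * ((β - α) / 2) * (1 / (2 * (α + 2 * β))) ≤
        2 * ((β - α) / 2) * Real.sqrt ((α + β) / (2 * (α + 2 * β))) := by
      apply mul_le_mul_of_nonneg_left hq (by linarith)
    have h2 : β / (α + 2 * β) - (α + β) / (2 * (α + 2 * β)) =
        2 * ((β - α) / 2) * (1 / (2 * (α + 2 * β))) := by
      field_simp; ring
    nlinarith [sq_nonneg ((β - α) / 2)]
  have := Real.sqrt_le_sqrt key
  rw [Real.sqrt_sq (by linarith)] at this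
  linarith
end

section
/- Let ρ > 0 be a real number, n ≥ 1 a natural number, and α, β real numbers with α ≥ 0 and β = α + 2ρ/√n. Define p₁ = 2/(4 + α), q₁ = 2/(4 + β), p₂ = p₃ = (2 + α)/(2(4 + α)), and q₂ = q₃ = (2 + β)/(2(4 + β)). Then (1/2)·[ (√p₁ − √q₁)² + (√p₂ − √q₂)² + (√p₃ − √q₃)² ] ≤ ρ²/(4n). -/
lemma sqrt_diff_sq_le (p q : ℝ) (hq : 0 < q) (hpq : q ≤ p) :
    (Real.sqrt p - Real.sqrt q) ^ 2 ≤ (p - q) ^ 2 / (4 * q) := by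
  have hq' : 0 < Real.sqrt q := Real.sqrt_pos.2 hq
  have hle : Real.sqrt q ≤ Real.sqrt p := Real.sqrt_le_sqrt hpq
  have hpq' : (Real.sqrt p - Real.sqrt q) * (Real.sqrt p + Real.sqrt q) = p - q := by
    have := Real.sq_sqrt (le_of_lt (lt_of_lt_of_le hq hpq))
    have := Real.sq_sqrt hq.le
    nlinarith
  have key : Real.sqrt p - Real.sqrt q ≤ (p - q) / (2 * Real.sqrt q) := by
    rw [le_div_iff₀ (by positivity)]
    nlinarith
  have h0 : 0 ≤ Real.sqrt p - Real.sqrt q := by linarith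
  calc (Real.sqrt p - Real.sqrt q) ^ 2 ≤ ((p - q) / (2 * Real.sqrt q)) ^ 2 := by
        apply pow_le_pow_left₀ h0 key
    _ = (p - q) ^ 2 / (4 * q) := by
        rw [div_pow]
        congr 1
        have := Real.sq_sqrt hq.le
        nlinarith

set_option maxHeartbeats 1000000 in
theorem stmt_14 (ρ : ℝ) (hρ : 0 < ρ) (n : ℕ) (hn : 1 ≤ n)
    (α β : ℝ) (hα : 0 ≤ α) (hβ : β = α + 2 * ρ / Real.sqrt n)
    (p₁ p₂ p₃ q₁ q₂ q₃ : ℝ)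
    (hp₁ : p₁ = 2 / (4 + α))
    (hq₁ : q₁ = 2 / (4 + β))
    (hp₂ : p₂ = (2 + α) / (2 * (4 + α)))
    (hp₃ : p₃ = (2 + α) / (2 * (4 + α)))
    (hq₂ : q₂ = (2 + β) / (2 * (4 + β)))
    (hq₃ : q₃ = (2 + β) / (2 * (4 + β))) :
    (1 / 2) * ((Real.sqrt p₁ - Real.sqrt q₁) ^ 2 + (Real.sqrt p₂ - Real.sqrt q₂) ^ 2 +
      (Real.sqrt p₃ - Real.sqrt q₃) ^ 2) ≤ ρ ^ 2 / (4 * n) := by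
  set d : ℝ := 2 * ρ / Real.sqrt n with hd_def
  have hn1 : (1:ℝ) ≤ (n:ℝ) := by exact_mod_cast hn
  have hsn : 1 ≤ Real.sqrt n := by
    rw [show (1:ℝ) = Real.sqrt 1 by simp]
    exact Real.sqrt_le_sqrt hn1
  have hsnpos : 0 < Real.sqrt n := by linarith
  have hd : 0 < d := by positivity
  have hdsq : d ^ 2 = 4 * ρ ^ 2 / n := by
    rw [hd_def, div_pow]
    rw [Real.sq_sqrt (by positivity : (0:ℝ) ≤ (n:ℝ))]
    ring
  have hβd : β = α + d := hβ
  have hA : (4:ℝ) ≤ 4 + α := by linarith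
  have hB : (4:ℝ) ≤ 4 + β := by rw [hβd]; linarith
  have hApos : (0:ℝ) < 4 + α := by linarith
  have hBpos : (0:ℝ) < 4 + β := by linarith
  have hq₁pos : 0 < q₁ := by rw [hq₁]; positivity
  have h1 : q₁ ≤ p₁ := by
    rw [hp₁, hq₁]
    apply div_le_div_of_nonneg_left (by norm_num) hApos
    rw [hβd]; linarith
  have T1 : (Real.sqrt p₁ - Real.sqrt q₁) ^ 2 ≤ d ^ 2 / 128 := by
    calc (Real.sqrt p₁ - Real.sqrt q₁) ^ 2 ≤ (p₁ - q₁) ^ 2 / (4 * q₁) :=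
          sqrt_diff_sq_le _ _ hq₁pos h1
      _ = d ^ 2 / (2 * (4 + α) ^ 2 * (4 + β)) := by
          rw [hp₁, hq₁, hβd]
          field_simp
          ring
      _ ≤ d ^ 2 / 128 := by
          apply div_le_div_of_nonneg_left (sq_nonneg d) (by norm_num)
          nlinarith
  have T2 : ∀ p q : ℝ, p = (2 + α) / (2 * (4 + α)) → q = (2 + β) / (2 * (4 + β)) →
      (Real.sqrt p - Real.sqrt q) ^ 2 ≤ d ^ 2 / 256 := by
    intro p q hp hq
    have hppos : 0 < p := by rw [hp]; positivity
    have hpq : p ≤ q := by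
      rw [hp, hq, div_le_div_iff₀ (by positivity) (by positivity)]
      nlinarith [hβd, hd.le]
    have hsw : (Real.sqrt p - Real.sqrt q) ^ 2 = (Real.sqrt q - Real.sqrt p) ^ 2 := by ring
    rw [hsw]
    calc (Real.sqrt q - Real.sqrt p) ^ 2 ≤ (q - p) ^ 2 / (4 * p) :=
          sqrt_diff_sq_le _ _ hppos hpq
      _ = d ^ 2 / (2 * (4 + α) * (4 + β) ^ 2 * (2 + α)) := by
          rw [hp, hq, hβd]
          field_simp
          ring
      _ ≤ d ^ 2 / 256 := by
          apply div_le_div_of_nonneg_left (sq_nonneg d) (by norm_num)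
          have h16 : (16:ℝ) ≤ (4 + β) ^ 2 := by nlinarith
          calc (256:ℝ) = 2 * 4 * 16 * 2 := by norm_num
            _ ≤ 2 * (4 + α) * (4 + β) ^ 2 * (2 + α) := by gcongr <;> linarith
  have T2' := T2 p₂ q₂ hp₂ hq₂
  have T3' := T2 p₃ q₃ hp₃ hq₃
  have hfin : ρ ^ 2 / (4 * n) = d ^ 2 / 16 := by
    rw [hdsq]
    field_simp
    ring
  rw [hfin]
  nlinarith [sq_nonneg d]
end

section
/- Let α, β be real numbers with 0 ≤ α ≤ β. Then √((2 + β)/(2(4 + β))) − √((2 + α)/(2(4 + α))) ≤ (β − α)/16. -/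
theorem stmt_16 (α β : ℝ) (hα : 0 ≤ α) (hαβ : α ≤ β) :
    Real.sqrt ((2 + β) / (2 * (4 + β))) - Real.sqrt ((2 + α) / (2 * (4 + α))) ≤ (β - α) / 16 := by
  have hβ : (0:ℝ) ≤ β := le_trans hα hαβ
  set p := (2 + α) / (2 * (4 + α)) with hp
  set q := (2 + β) / (2 * (4 + β)) with hq
  have hpden : (0:ℝ) < 2 * (4 + α) := by linarith
  have hqden : (0:ℝ) < 2 * (4 + β) := by linarith
  have hp0 : (0:ℝ) ≤ p := by positivity
  have hq0 : (0:ℝ) ≤ q := by positivity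
  have hp14 : (1:ℝ)/4 ≤ p := by
    rw [hp, le_div_iff₀ hpden]; linarith
  have hq14 : (1:ℝ)/4 ≤ q := by
    rw [hq, le_div_iff₀ hqden]; linarith
  have hsp : (1:ℝ)/2 ≤ Real.sqrt p := by
    have := Real.sqrt_le_sqrt hp14
    rwa [show (1:ℝ)/4 = (1/2)^2 by norm_num, Real.sqrt_sq (by norm_num)] at this
  have hsq : (1:ℝ)/2 ≤ Real.sqrt q := by
    have := Real.sqrt_le_sqrt hq14
    rwa [show (1:ℝ)/4 = (1/2)^2 by norm_num, Real.sqrt_sq (by norm_num)] at this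
  have hsq2 : Real.sqrt q ^ 2 = q := Real.sq_sqrt hq0
  have hsp2 : Real.sqrt p ^ 2 = p := Real.sq_sqrt hp0
  have hpq : p ≤ q := by
    rw [hp, hq, div_le_div_iff₀ hpden hqden]; nlinarith
  have hspq : Real.sqrt p ≤ Real.sqrt q := Real.sqrt_le_sqrt hpq
  have hdiff : Real.sqrt q - Real.sqrt p ≤ q - p := by
    nlinarith [hsp, hsq, hsq2, hsp2, hspq]
  have hqp : q - p ≤ (β - α) / 16 := by
    rw [hq, hp, div_sub_div _ _ (ne_of_gt hqden) (ne_of_gt hpden),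
      div_le_div_iff₀ (by positivity) (by norm_num : (0:ℝ) < 16)]
    nlinarith [mul_nonneg hα hβ, mul_nonneg (mul_nonneg hα hβ) hβ,
      mul_nonneg (mul_nonneg hα hα) hβ, sub_nonneg.mpr hαβ]
  linarith
end

section
/- Let n ≥ 2 be a natural number, α ∈ (0, 1] a real number, k a natural number with k ≥ α·n, and h ∈ [0,1] a real number. Suppose 4·√(log n/(α·n)) ≤ 1/6. Let X_1,…,X_k be independent identically distributed {0,1}-valued random variables on a probability space with ℙ(X_i = 1) = 1/(2 + h) for each i, and set A = (Σ_{i=1}^k X_i)/k. Then with probability at least 1 − 1/n⁶, both A ≥ 1/6 and the real number h′ := 1/A − 2 satisfies |h′ − h| ≤ 72·√(log n/(α·n)). -/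
open MeasureTheory ProbabilityTheory Real

lemma exp_le_quad {x : ℝ} (hx : |x| ≤ 1) : Real.exp x ≤ 1 + x + (3/4) * x ^ 2 := by
  have h := Real.exp_bound hx (n := 2) (by norm_num)
  have hs : ∑ m ∈ Finset.range 2, x ^ m / m.factorial = 1 + x := by
    simp [Finset.sum_range_succ]
  rw [hs] at h
  have h3 := (abs_sub_le_iff.1 h).1
  norm_num [Nat.factorial] at h3
  nlinarith [sq_abs x]

set_option maxHeartbeats 1000000 in
theorem stmt_17 {Ω : Type*} [MeasureSpace Ω] [IsProbabilityMeasure (ℙ : Measure Ω)]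
    (n : ℕ) (hn : 2 ≤ n) (α : ℝ) (hα0 : 0 < α) (hα1 : α ≤ 1)
    (k : ℕ) (hk : α * n ≤ k)
    (h : ℝ) (hh0 : 0 ≤ h) (hh1 : h ≤ 1)
    (hsmall : 4 * Real.sqrt (Real.log n / (α * n)) ≤ 1 / 6)
    (X : Fin k → Ω → ℝ)
    (hXmeas : ∀ i, Measurable (X i))
    (hX01 : ∀ i ω, X i ω = 0 ∨ X i ω = 1)
    (hXindep : iIndepFun X ℙ)
    (hXp : ∀ i, ℙ {ω | X i ω = 1} = ENNReal.ofReal (1 / (2 + h))) :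
    ENNReal.ofReal (1 - 1 / (n : ℝ) ^ 6) ≤
      ℙ {ω | 1 / 6 ≤ (∑ i, X i ω) / k ∧
        |(1 / ((∑ i, X i ω) / k) - 2) - h| ≤ 72 * Real.sqrt (Real.log n / (α * n))} := by
  set ε : ℝ := Real.sqrt (Real.log n / (α * n)) with hε_def
  set p : ℝ := 1 / (2 + h) with hp_def
  set t : ℝ := 4 * ε with ht_def
  -- basic numeric facts
  have hn1 : (1:ℝ) < n := by exact_mod_cast hn
  have h2n : (2:ℝ) ≤ n := by exact_mod_cast hn
  have hn0 : (0:ℝ) < n := by linarith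
  have hlogn : 0 < Real.log n := Real.log_pos hn1
  have hαn : 0 < α * n := by positivity
  have hε0 : 0 < ε := Real.sqrt_pos.2 (by positivity)
  have hεsq : ε ^ 2 = Real.log n / (α * n) := Real.sq_sqrt (by positivity)
  have ht0 : 0 < t := by positivity
  have ht16 : t ≤ 1/6 := hsmall
  have h2h0 : (0:ℝ) < 2 + h := by linarith
  have hp0 : 0 < p := by rw [hp_def]; positivity
  have hp13 : 1/3 ≤ p := by
    rw [hp_def]
    have := one_div_le_one_div_of_le h2h0 (by linarith : 2 + h ≤ 3)
    linarith
  have hp12 : p ≤ 1/2 := by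
    rw [hp_def]
    have := one_div_le_one_div_of_le (by norm_num : (0:ℝ) < 2) (by linarith : (2:ℝ) ≤ 2 + h)
    linarith
  have hk0 : (0:ℝ) < k := lt_of_lt_of_le hαn hk
  have ktsq : 16 * Real.log n ≤ (k:ℝ) * t ^ 2 := by
    have hq : (k:ℝ) * t ^ 2 = 16 * ((k:ℝ) / (α * n)) * Real.log n := by
      rw [ht_def, mul_pow, hεsq]; field_simp; ring
    have h1 : (1:ℝ) ≤ (k:ℝ) / (α * n) := (one_le_div hαn).2 hk
    rw [hq]; nlinarith
  -- per-coordinate facts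
  have hmeas1 : ∀ i, MeasurableSet (X i ⁻¹' {1}) :=
    fun i => hXmeas i (measurableSet_singleton 1)
  have hind : ∀ i, X i = (X i ⁻¹' {1}).indicator (fun _ => (1:ℝ)) := by
    intro i; funext ω
    rcases hX01 i ω with h0 | h1
    · rw [Set.indicator_of_notMem (by simp [Set.mem_preimage, h0])]; exact h0
    · rw [Set.indicator_of_mem (by simp [Set.mem_preimage, h1])]; exact h1
  have hintX : ∀ i, Integrable (X i) ℙ := by
    intro i; rw [hind i]
    exact (integrable_const 1).indicator (hmeas1 i)
  have hEX : ∀ i, ∫ ω, X i ω = p := by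
    intro i
    rw [hind i, MeasureTheory.integral_indicator_const (1:ℝ) (hmeas1 i)]
    have hset : X i ⁻¹' {1} = {ω | X i ω = 1} := rfl
    rw [hset, measureReal_def, hXp i, smul_eq_mul, mul_one, ENNReal.toReal_ofReal hp0.le]
  have hptw : ∀ (s : ℝ) i, (fun ω => Real.exp (s * X i ω)) =
      fun ω => 1 + (Real.exp s - 1) * X i ω := by
    intro s i; funext ω
    rcases hX01 i ω with h0 | h1
    · rw [h0]; simp
    · rw [h1]; simp
  have hint_exp : ∀ (s : ℝ) i, Integrable (fun ω => Real.exp (s * X i ω)) ℙ := by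
    intro s i
    rw [hptw s i]
    exact (integrable_const 1).add ((hintX i).const_mul _)
  have hmgf_i : ∀ (s : ℝ) i, mgf (X i) ℙ s = 1 + (Real.exp s - 1) * p := by
    intro s i
    rw [mgf, hptw s i,
      integral_add (integrable_const 1) ((hintX i).const_mul _),
      integral_const, integral_const_mul, hEX i]
    simp
  have hmgfS : ∀ s : ℝ, mgf (∑ i, X i) ℙ s = (1 + (Real.exp s - 1) * p) ^ k := by
    intro s
    rw [hXindep.mgf_sum hXmeas Finset.univ]
    simp [hmgf_i s]
  have hintS : ∀ s : ℝ, Integrable (fun ω => Real.exp (s * (∑ i, X i) ω)) ℙ :=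
    fun s => hXindep.integrable_exp_mul_sum hXmeas (fun i _ => hint_exp s i)
  -- mgf bound
  have hbase_nonneg : ∀ s : ℝ, 0 ≤ 1 + (Real.exp s - 1) * p := by
    intro s
    nlinarith [Real.exp_pos s, hp0, hp12]
  have hkey : ∀ s : ℝ, |s| ≤ 1 →
      mgf (∑ i, X i) ℙ s ≤ Real.exp ((k:ℝ) * (p * (s + (3/4) * s ^ 2))) := by
    intro s hs
    rw [hmgfS s]
    have h1 : 1 + (Real.exp s - 1) * p ≤ Real.exp (p * (s + (3/4) * s ^ 2)) := by
      have h2 : (Real.exp s - 1) * p ≤ p * (s + (3/4) * s ^ 2) := by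
        have := exp_le_quad hs
        nlinarith [hp0]
      calc 1 + (Real.exp s - 1) * p ≤ 1 + p * (s + (3/4) * s ^ 2) := by linarith
        _ ≤ Real.exp (p * (s + (3/4) * s ^ 2)) := by
            linarith [Real.add_one_le_exp (p * (s + (3/4) * s ^ 2))]
    calc (1 + (Real.exp s - 1) * p) ^ k ≤ (Real.exp (p * (s + (3/4) * s ^ 2))) ^ k :=
          pow_le_pow_left₀ (hbase_nonneg s) h1 k
      _ = Real.exp ((k:ℝ) * (p * (s + (3/4) * s ^ 2))) := by
          rw [← Real.exp_nat_mul]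
  -- pointwise sum identity
  have hFapp : ∀ ω, (∑ i, X i) ω = ∑ i, X i ω := fun ω => by simp
  have ht1 : |t| ≤ 1 := by rw [abs_of_pos ht0]; linarith
  have hnt1 : |(-t)| ≤ 1 := by rw [abs_neg]; exact ht1
  -- Chernoff tails
  have hU : (ℙ {ω | (k:ℝ) * (p + t) ≤ (∑ i, X i) ω}).toReal ≤
      Real.exp (((3/4) * p - 1) * ((k:ℝ) * t ^ 2)) := by
    refine (measure_ge_le_exp_mul_mgf (X := ∑ i, X i) (μ := ℙ) (t := t)
      ((k:ℝ) * (p + t)) ht0.le (hintS t)).trans ?_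
    have heq : Real.exp (-t * ((k:ℝ) * (p + t))) *
        Real.exp ((k:ℝ) * (p * (t + (3/4) * t ^ 2))) =
        Real.exp (((3/4) * p - 1) * ((k:ℝ) * t ^ 2)) := by
      rw [← Real.exp_add]; congr 1; ring
    rw [← heq]
    exact mul_le_mul_of_nonneg_left (hkey t ht1) (Real.exp_pos _).le
  have hL : (ℙ {ω | (∑ i, X i) ω ≤ (k:ℝ) * (p - t)}).toReal ≤
      Real.exp (((3/4) * p - 1) * ((k:ℝ) * t ^ 2)) := by
    refine (measure_le_le_exp_mul_mgf (X := ∑ i, X i) (μ := ℙ) (t := -t)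
      ((k:ℝ) * (p - t)) (by linarith) (hintS (-t))).trans ?_
    have heq : Real.exp (-(-t) * ((k:ℝ) * (p - t))) *
        Real.exp ((k:ℝ) * (p * (-t + (3/4) * (-t) ^ 2))) =
        Real.exp (((3/4) * p - 1) * ((k:ℝ) * t ^ 2)) := by
      rw [← Real.exp_add]; congr 1; ring
    rw [← heq]
    exact mul_le_mul_of_nonneg_left (hkey (-t) hnt1) (Real.exp_pos _).le
  -- numeric bound on the tail
  have hnum : Real.exp (((3/4) * p - 1) * ((k:ℝ) * t ^ 2)) ≤ 1/2 * (1 / (n:ℝ) ^ 6) := by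
    have hc : (3/4) * p - 1 ≤ -(5/8) := by linarith
    have hM : (0:ℝ) ≤ (k:ℝ) * t ^ 2 := by positivity
    have hstep : ((3/4) * p - 1) * ((k:ℝ) * t ^ 2) ≤ -(10 * Real.log n) := by
      nlinarith
    have h10 : Real.exp (-(10 * Real.log n)) = ((n:ℝ) ^ 10)⁻¹ := by
      rw [Real.exp_neg]
      congr 1
      rw [show (10:ℝ) * Real.log n = ((10:ℕ):ℝ) * Real.log n by norm_num,
        Real.exp_nat_mul, Real.exp_log hn0]
    have h2 : ((n:ℝ) ^ 10)⁻¹ ≤ 1/2 * (1 / (n:ℝ) ^ 6) := by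
      rw [show (1:ℝ)/2 * (1 / (n:ℝ) ^ 6) = (2 * (n:ℝ) ^ 6)⁻¹ by ring]
      apply inv_anti₀ (by positivity)
      have h4 : (2:ℝ) ^ 4 ≤ (n:ℝ) ^ 4 := pow_le_pow_left₀ (by norm_num) h2n 4
      nlinarith [pow_nonneg hn0.le 6, pow_nonneg hn0.le 4]
    calc Real.exp (((3/4) * p - 1) * ((k:ℝ) * t ^ 2)) ≤ Real.exp (-(10 * Real.log n)) :=
          Real.exp_le_exp.2 hstep
      _ = ((n:ℝ) ^ 10)⁻¹ := h10
      _ ≤ 1/2 * (1 / (n:ℝ) ^ 6) := h2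
  -- deterministic part
  have hdet : ∀ a : ℝ, p - t ≤ a → a ≤ p + t →
      1/6 ≤ a ∧ |1/a - 2 - h| ≤ 72 * ε := by
    intro a h1 h2
    have ha16 : 1/6 ≤ a := by linarith
    have ha0 : 0 < a := by linarith
    refine ⟨ha16, ?_⟩
    have heq : 1/a - 2 - h = (p - a) / (a * p) := by
      rw [hp_def]; field_simp; ring
    rw [heq, abs_div, abs_of_pos (by positivity : (0:ℝ) < a * p)]
    have habs : |p - a| ≤ t := abs_le.2 ⟨by linarith, by linarith⟩
    have h18 : 1/18 ≤ a * p := by nlinarith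
    calc |p - a| / (a * p) ≤ t / (1/18) :=
          div_le_div₀ ht0.le habs (by norm_num) h18
      _ = 72 * ε := by rw [ht_def]; ring
  -- measurability of the good event
  have hsum_meas : Measurable (fun ω => ∑ i, X i ω) :=
    Finset.measurable_sum Finset.univ (fun i _ => hXmeas i)
  have hGmeas : MeasurableSet {ω : Ω | 1 / 6 ≤ (∑ i, X i ω) / k ∧
      |(1 / ((∑ i, X i ω) / k) - 2) - h| ≤ 72 * ε} := by
    apply MeasurableSet.inter
    · exact measurableSet_le measurable_const (hsum_meas.div_const _)
    · exact measurableSet_le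
        (((measurable_const.div (hsum_meas.div_const _)).sub measurable_const).sub
          measurable_const).abs measurable_const
  -- inclusion of the complement in the union of tails
  have hsub : {ω : Ω | 1 / 6 ≤ (∑ i, X i ω) / k ∧
      |(1 / ((∑ i, X i ω) / k) - 2) - h| ≤ 72 * ε}ᶜ ⊆
      {ω | (k:ℝ) * (p + t) ≤ (∑ i, X i) ω} ∪ {ω | (∑ i, X i) ω ≤ (k:ℝ) * (p - t)} := by
    intro ω hω
    rw [Set.mem_union]
    by_contra hno
    push_neg at hno
    obtain ⟨hnu, hnl⟩ := hno
    simp only [Set.mem_setOf_eq, not_le, hFapp ω] at hnu hnl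
    have h1 : p - t ≤ (∑ i, X i ω) / k := by
      rw [le_div_iff₀ hk0]; nlinarith
    have h2 : (∑ i, X i ω) / k ≤ p + t := by
      rw [div_le_iff₀ hk0]; nlinarith
    obtain ⟨hA, hB⟩ := hdet ((∑ i, X i ω) / k) h1 h2
    exact hω ⟨hA, hB⟩
  -- measure arithmetic
  have hmU : ℙ {ω | (k:ℝ) * (p + t) ≤ (∑ i, X i) ω} ≤
      ENNReal.ofReal (Real.exp (((3/4) * p - 1) * ((k:ℝ) * t ^ 2))) := by
    rw [← ENNReal.ofReal_toReal (measure_ne_top ℙ _)]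
    exact ENNReal.ofReal_le_ofReal hU
  have hmL : ℙ {ω | (∑ i, X i) ω ≤ (k:ℝ) * (p - t)} ≤
      ENNReal.ofReal (Real.exp (((3/4) * p - 1) * ((k:ℝ) * t ^ 2))) := by
    rw [← ENNReal.ofReal_toReal (measure_ne_top ℙ _)]
    exact ENNReal.ofReal_le_ofReal hL
  have hGc : ℙ {ω : Ω | 1 / 6 ≤ (∑ i, X i ω) / k ∧
      |(1 / ((∑ i, X i ω) / k) - 2) - h| ≤ 72 * ε}ᶜ ≤ ENNReal.ofReal (1 / (n:ℝ) ^ 6) := by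
    calc ℙ _ ≤ ℙ ({ω | (k:ℝ) * (p + t) ≤ (∑ i, X i) ω} ∪
          {ω | (∑ i, X i) ω ≤ (k:ℝ) * (p - t)}) := measure_mono hsub
      _ ≤ ℙ {ω | (k:ℝ) * (p + t) ≤ (∑ i, X i) ω} +
          ℙ {ω | (∑ i, X i) ω ≤ (k:ℝ) * (p - t)} := measure_union_le _ _
      _ ≤ ENNReal.ofReal (Real.exp (((3/4) * p - 1) * ((k:ℝ) * t ^ 2))) +
          ENNReal.ofReal (Real.exp (((3/4) * p - 1) * ((k:ℝ) * t ^ 2))) :=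
          add_le_add hmU hmL
      _ = ENNReal.ofReal (2 * Real.exp (((3/4) * p - 1) * ((k:ℝ) * t ^ 2))) := by
          rw [← ENNReal.ofReal_add (Real.exp_pos _).le (Real.exp_pos _).le]; ring_nf
      _ ≤ ENNReal.ofReal (1 / (n:ℝ) ^ 6) := ENNReal.ofReal_le_ofReal (by linarith)
  -- conclude
  have hsum1 : ℙ {ω : Ω | 1 / 6 ≤ (∑ i, X i ω) / k ∧
      |(1 / ((∑ i, X i ω) / k) - 2) - h| ≤ 72 * ε} +
      ℙ {ω : Ω | 1 / 6 ≤ (∑ i, X i ω) / k ∧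
      |(1 / ((∑ i, X i ω) / k) - 2) - h| ≤ 72 * ε}ᶜ = 1 :=
    (measure_add_measure_compl hGmeas).trans measure_univ
  have h1n6 : (0:ℝ) ≤ 1 / (n:ℝ) ^ 6 := by positivity
  have hofr : ENNReal.ofReal (1 - 1 / (n:ℝ) ^ 6) + ENNReal.ofReal (1 / (n:ℝ) ^ 6) = 1 := by
    rw [← ENNReal.ofReal_add _ h1n6]
    · norm_num
    · have hle1 : 1 / (n:ℝ) ^ 6 ≤ 1 := by
        rw [div_le_one (by positivity)]
        calc (1:ℝ) ≤ 2 ^ 6 := by norm_num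
          _ ≤ (n:ℝ) ^ 6 := pow_le_pow_left₀ (by norm_num) h2n 6
      linarith
  refine ENNReal.le_of_add_le_add_right (a := ENNReal.ofReal (1 / (n:ℝ) ^ 6)) ENNReal.ofReal_ne_top ?_
  rw [hofr, ← hsum1]
  exact add_le_add le_rfl hGc
end
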